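/- arXiv:1109.3915 — 4 statements merged into one kernel-verified Lean document; each statement's English description precedes it below -/
import Mathlib

section
/- There exists a universal constant C such that for every n ≥ 2, the mixing time of the random transposition walk on the symmetric group S_n satisfies τ_mix ≤ C · n · log n, where τ_mix = min{t : max_{σ ∈ S_n} ‖P̄^t(σ,·) − π̄‖_TV ≤ 1/4}. -/
noncomputable section
open scoped BigOperators Classical

/-- Total variation distance between two functions (distributions) on a finite set. -/
def tvDist {Ω : Type*} [Fintype Ω] (μ ν : Ω → ℝ) : ℝ := (∑ x, |μ x - ν x|) / 2

/-- Transition matrix of the random transposition walk on `S_n`. -/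
def rtMatrix (n : ℕ) : Matrix (Equiv.Perm (Fin n)) (Equiv.Perm (Fin n)) ℝ :=
  fun σ α =>
    ((Finset.univ.filter (fun ij : Fin n × Fin n => σ * Equiv.swap ij.1 ij.2 = α)).card : ℝ)
      / (n : ℝ) ^ 2

/-- Uniform (stationary) distribution on `S_n`. -/
def rtPi (n : ℕ) : Equiv.Perm (Fin n) → ℝ := fun _ => ((n.factorial : ℝ))⁻¹

/-- Cycle type of a permutation, as a partition of `n`. -/
def cyc (n : ℕ) (α : Equiv.Perm (Fin n)) : Nat.Partition n :=
  cast (congrArg Nat.Partition (Fintype.card_fin n)) α.partition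

/-- Transition probabilities of the split-merge chain on partitions of `n`. -/
def smKernel (n : ℕ) (p q : Nat.Partition n) : ℝ :=
  (if q = p then (1 : ℝ) / n else 0)
  + (p.parts.map (fun a =>
      ∑ r ∈ Finset.Ico 1 a,
        if q.parts = r ::ₘ (a - r) ::ₘ p.parts.erase a then (a : ℝ) / (n : ℝ) ^ 2 else 0)).sum
  + (p.parts.map (fun a =>
      ((p.parts.erase a).map (fun b =>
        if q.parts = (a + b) ::ₘ ((p.parts.erase a).erase b) then
          (a : ℝ) * (b : ℝ) / (n : ℝ) ^ 2 else 0)).sum)).sum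

/-- Transition matrix of the split-merge chain. -/
def smMatrix (n : ℕ) : Matrix (Nat.Partition n) (Nat.Partition n) ℝ := fun p q => smKernel n p q

/-- Stationary distribution of the split-merge chain: `π(σ) = |Perm(σ)|/n!`. -/
def smPi (n : ℕ) : Nat.Partition n → ℝ := fun σ =>
  ((Finset.univ.filter (fun α : Equiv.Perm (Fin n) => cyc n α = σ)).card : ℝ) / (n.factorial : ℝ)

/-- `p` is obtained from `q` by splitting one part into two. -/
def IsSplitOf (n : ℕ) (p q : Nat.Partition n) : Prop :=
  ∃ a ∈ q.parts, ∃ r : ℕ, 1 ≤ r ∧ r < a ∧ p.parts = r ::ₘ (a - r) ::ₘ q.parts.erase a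

/-- Adjacency graph of single split/merge moves on partitions of `n`. -/
def smGraph (n : ℕ) : SimpleGraph (Nat.Partition n) where
  Adj p q := p ≠ q ∧ (IsSplitOf n p q ∨ IsSplitOf n q p)
  symm := ⟨fun p q h => ⟨h.1.symm, h.2.symm⟩⟩
  loopless := ⟨fun p h => h.1 rfl⟩

/-- The split-merge graph distance `ρ` on partitions of `n`. -/
def rho (n : ℕ) (p q : Nat.Partition n) : ℕ := (smGraph n).dist p q

/-- The multiset of parts on which two partitions differ. -/
def diffParts {n : ℕ} (σ τ : Nat.Partition n) : Multiset ℕ :=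
  (σ.parts - τ.parts) + (τ.parts - σ.parts)

/-- `s(σ,τ)`: the smallest part in which adjacent `σ` and `τ` differ; `s(σ,σ) = n/2`. -/
def sPart (n : ℕ) (σ τ : Nat.Partition n) : ℝ :=
  if σ = τ then (n : ℝ) / 2 else ((((diffParts σ τ).sort (· ≤ ·)).headI : ℕ) : ℝ)

/-- `m(σ,τ)`: the medium part in which adjacent `σ` and `τ` differ; `m(σ,σ) = n`. -/
def mPart (n : ℕ) (σ τ : Nat.Partition n) : ℝ :=
  if σ = τ then (n : ℝ) else (((((diffParts σ τ).sort (· ≤ ·)).tail).headI : ℕ) : ℝ)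

/-- `|V(σ,x)|`: the sum of the parts of `σ` of size at least `x`. -/
def Vsum {n : ℕ} (σ : Nat.Partition n) (x : ℝ) : ℝ :=
  (((Multiset.filter (fun a : ℕ => x ≤ (a : ℝ)) σ.parts).sum : ℕ) : ℝ)

/-- A coupling of two split-merge chains started at `(σ, τ)`, given by the probabilities
`P t h` of each finite trajectory `h` of states at times `0, …, t`. -/
def IsSMCoupling (n : ℕ) (σ τ : Nat.Partition n)
    (P : (t : ℕ) → (Fin (t + 1) → Nat.Partition n × Nat.Partition n) → ℝ) : Prop :=
  (∀ t h, 0 ≤ P t h) ∧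
  (P 0 (fun _ => (σ, τ)) = 1) ∧
  (∀ (t : ℕ) (h : Fin (t + 1) → Nat.Partition n × Nat.Partition n),
      P t h = ∑ z : Nat.Partition n × Nat.Partition n, P (t + 1) (Fin.snoc h z)) ∧
  (∀ (t : ℕ) (h : Fin (t + 1) → Nat.Partition n × Nat.Partition n) (a : Nat.Partition n),
      ∑ b : Nat.Partition n, P (t + 1) (Fin.snoc h (a, b))
        = smKernel n (h (Fin.last t)).1 a * P t h) ∧
  (∀ (t : ℕ) (h : Fin (t + 1) → Nat.Partition n × Nat.Partition n) (b : Nat.Partition n),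
      ∑ a : Nat.Partition n, P (t + 1) (Fin.snoc h (a, b))
        = smKernel n (h (Fin.last t)).2 b * P t h)

/-- The coupling is coalescent: once the two coordinates meet they stay together. -/
def IsCoalescent (n : ℕ)
    (P : (t : ℕ) → (Fin (t + 1) → Nat.Partition n × Nat.Partition n) → ℝ) : Prop :=
  ∀ (t : ℕ) (h : Fin (t + 1) → Nat.Partition n × Nat.Partition n), P t h ≠ 0 →
    ∀ i j : Fin (t + 1), i ≤ j → (h i).1 = (h i).2 → (h j).1 = (h j).2

/-- Along the coupling, `ρ(X_t, Y_t) ≤ 1` almost surely. -/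
def StaysClose (n : ℕ)
    (P : (t : ℕ) → (Fin (t + 1) → Nat.Partition n × Nat.Partition n) → ℝ) : Prop :=
  ∀ (t : ℕ) (h : Fin (t + 1) → Nat.Partition n × Nat.Partition n), P t h ≠ 0 →
    ∀ i : Fin (t + 1), rho n (h i).1 (h i).2 ≤ 1

/-- On the event `X_t ≠ Y_t`, the conditional probability of meeting at time `t+1`
is at least `4 s(X_t,Y_t)/n²`. -/
def MeetLowerBound (n : ℕ)
    (P : (t : ℕ) → (Fin (t + 1) → Nat.Partition n × Nat.Partition n) → ℝ) : Prop :=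
  ∀ (t : ℕ) (h : Fin (t + 1) → Nat.Partition n × Nat.Partition n),
    (h (Fin.last t)).1 ≠ (h (Fin.last t)).2 →
      4 * sPart n (h (Fin.last t)).1 (h (Fin.last t)).2 / (n : ℝ) ^ 2 * P t h ≤
        ∑ z : Nat.Partition n, P (t + 1) (Fin.snoc h (z, z))

/-- Probability that the pair of chains at time `t` satisfies `E`. -/
def probAt (n : ℕ)
    (P : (t : ℕ) → (Fin (t + 1) → Nat.Partition n × Nat.Partition n) → ℝ) (t : ℕ)
    (E : Nat.Partition n × Nat.Partition n → Prop) : ℝ :=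
  ∑ h : Fin (t + 1) → Nat.Partition n × Nat.Partition n,
    if E (h (Fin.last t)) then P t h else 0

/-- Expectation of `g(X_t, Y_t)`. -/
def expAt (n : ℕ)
    (P : (t : ℕ) → (Fin (t + 1) → Nat.Partition n × Nat.Partition n) → ℝ) (t : ℕ)
    (g : Nat.Partition n × Nat.Partition n → ℝ) : ℝ :=
  ∑ h : Fin (t + 1) → Nat.Partition n × Nat.Partition n, P t h * g (h (Fin.last t))

/-- A coupling of one step of the split-merge chain from `σ` and from `τ`. -/
def IsOneStepCoupling (n : ℕ) (σ τ : Nat.Partition n)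
    (μ : Nat.Partition n × Nat.Partition n → ℝ) : Prop :=
  (∀ z, 0 ≤ μ z) ∧ (∀ p, ∑ q, μ (p, q) = smKernel n σ p) ∧
    (∀ q, ∑ p, μ (p, q) = smKernel n τ q)

/-- Length of the cycle of `α` containing `v`. -/
def cycLen {n : ℕ} (α : Equiv.Perm (Fin n)) (v : Fin n) : ℕ :=
  Function.minimalPeriod ⇑α v

namespace RTWork

variable (n : ℕ)

abbrev St (n : ℕ) := Equiv.Perm (Fin n) × Finset (Fin n)

def step (s : St n) (l : Fin n × Fin n) : St n :=
  (s.1 * Equiv.swap l.1 l.2,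
   if s.1 l.2 ∉ s.2 ∧ (s.1 l.1 ∈ s.2 ∨ l.1 = l.2) then insert (s.1 l.2) s.2 else s.2)

def G : ℕ → St n → ℕ
  | 0, s => if s = (1, ∅) then 1 else 0
  | t+1, s => ∑ l : Fin n × Fin n, ∑ s' : St n, if step n s' l = s then G t s' else 0

lemma G_zero (s : St n) : G n 0 s = if s = (1, ∅) then 1 else 0 := rfl

lemma G_succ' (t : ℕ) (s : St n) :
    G n (t+1) s = ∑ l : Fin n × Fin n, ∑ s' : St n, if step n s' l = s then G n t s' else 0 := rfl

lemma G_succ (t : ℕ) (X : Equiv.Perm (Fin n)) (M : Finset (Fin n)) :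
    G n (t+1) (X, M) =
      ∑ l : Fin n × Fin n,
        ((if X l.1 ∈ M ∨ (X l.2 ∉ M ∧ l.1 ≠ l.2) then G n t (X * Equiv.swap l.1 l.2, M) else 0)
        + (if X l.1 ∈ M ∧ X l.2 ∈ M then
            G n t (X * Equiv.swap l.1 l.2, M.erase (X l.1)) else 0)) := by
  rw [G_succ']
  refine Finset.sum_congr rfl fun l _ => ?_
  rw [Fintype.sum_prod_type]
  have hswap : ∀ Y : Equiv.Perm (Fin n), Y * Equiv.swap l.1 l.2 = X ↔ Y = X * Equiv.swap l.1 l.2 := by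
    intro Y
    constructor
    · intro h; rw [← h, mul_assoc, Equiv.swap_mul_self, mul_one]
    · intro h; rw [h, mul_assoc, Equiv.swap_mul_self, mul_one]
  set Y := X * Equiv.swap l.1 l.2 with hY
  have hR : Y l.2 = X l.1 := by
    simp [hY, Equiv.Perm.mul_apply, Equiv.swap_apply_right]
  have hL : Y l.1 = X l.2 := by
    simp [hY, Equiv.Perm.mul_apply, Equiv.swap_apply_left]
  have hcol : ∀ Z : Equiv.Perm (Fin n),
      (∑ M' : Finset (Fin n), if step n (Z, M') l = (X, M) then G n t (Z, M') else 0)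
      = if Z = Y then
          (∑ M' : Finset (Fin n),
            if (if Z l.2 ∉ M' ∧ (Z l.1 ∈ M' ∨ l.1 = l.2) then insert (Z l.2) M' else M') = M
            then G n t (Z, M') else 0)
        else 0 := by
    intro Z
    split_ifs with hZ
    · refine Finset.sum_congr rfl fun M' _ => ?_
      refine if_congr ?_ rfl rfl
      simp only [step, Prod.mk.injEq]
      constructor
      · rintro ⟨-, h2⟩; exact h2
      · intro h2; exact ⟨by rw [hZ]; exact (hswap Y).mpr rfl, h2⟩
    · refine Finset.sum_eq_zero fun M' _ => ?_
      rw [if_neg]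
      simp only [step, Prod.mk.injEq]
      rintro ⟨h1, -⟩
      exact hZ ((hswap Z).mp h1)
  calc (∑ Z : Equiv.Perm (Fin n), ∑ M' : Finset (Fin n),
          if step n (Z, M') l = (X, M) then G n t (Z, M') else 0)
      = ∑ Z : Equiv.Perm (Fin n), if Z = Y then
          (∑ M' : Finset (Fin n),
            if (if Z l.2 ∉ M' ∧ (Z l.1 ∈ M' ∨ l.1 = l.2) then insert (Z l.2) M' else M') = M
            then G n t (Z, M') else 0) else 0 :=
        Finset.sum_congr rfl fun Z _ => hcol Z
    _ = ∑ M' : Finset (Fin n),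
          if (if Y l.2 ∉ M' ∧ (Y l.1 ∈ M' ∨ l.1 = l.2) then insert (Y l.2) M' else M') = M
          then G n t (Y, M') else 0 := by rw [Finset.sum_ite_eq' Finset.univ Y]; simp
    _ = _ := by
        rw [hR, hL]
        have key : ∀ M' : Finset (Fin n),
            ((if X l.1 ∉ M' ∧ (X l.2 ∈ M' ∨ l.1 = l.2) then insert (X l.1) M' else M') = M)
            ↔ ((M' = M ∧ (X l.1 ∈ M ∨ (X l.2 ∉ M ∧ l.1 ≠ l.2)))
              ∨ (M' = M.erase (X l.1) ∧ (X l.1 ∈ M ∧ X l.2 ∈ M))) := by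
          intro M'
          constructor
          · intro h
            split_ifs at h with hc
            · right
              have hXM : X l.1 ∈ M := h ▸ Finset.mem_insert_self _ _
              have hM' : M' = M.erase (X l.1) := by
                rw [← h, Finset.erase_insert hc.1]
              refine ⟨hM', hXM, ?_⟩
              rcases hc.2 with h2 | h2
              · exact (h ▸ Finset.mem_insert_of_mem h2 : X l.2 ∈ M)
              · rw [← h2]; exact hXM
            · left
              push_neg at hc
              refine ⟨h, ?_⟩
              by_cases hx : X l.1 ∈ M
              · exact Or.inl hx
              · right
                rw [← h] at hx
                rcases (hc hx) with ⟨h2, h3⟩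
                rw [← h]; exact ⟨h2, h3⟩
          · rintro (⟨rfl, hnm⟩ | ⟨rfl, hx1, hx2⟩)
            · rw [if_neg]
              push_neg
              intro h1
              rcases hnm with h | ⟨h2, h3⟩
              · exact absurd h h1
              · exact ⟨fun hh => absurd hh h2, h3⟩
            · rw [if_pos, Finset.insert_erase hx1]
              refine ⟨Finset.notMem_erase _ _, ?_⟩
              by_cases hd : l.1 = l.2
              · exact Or.inr hd
              · left
                exact Finset.mem_erase.mpr ⟨fun hh => (hd (X.injective hh.symm)).elim, hx2⟩
        have summand : ∀ M' : Finset (Fin n),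
            (if (if X l.1 ∉ M' ∧ (X l.2 ∈ M' ∨ l.1 = l.2) then insert (X l.1) M' else M') = M
              then G n t (Y, M') else 0)
            = (if M' = M then (if X l.1 ∈ M ∨ (X l.2 ∉ M ∧ l.1 ≠ l.2) then G n t (Y, M) else 0) else 0)
            + (if M' = M.erase (X l.1) then
                (if X l.1 ∈ M ∧ X l.2 ∈ M then G n t (Y, M.erase (X l.1)) else 0) else 0) := by
          intro M'
          rw [if_congr (key M') rfl rfl]
          by_cases e1 : M' = M <;> by_cases e2 : M' = M.erase (X l.1) <;>
            by_cases c1 : (X l.1 ∈ M ∨ (X l.2 ∉ M ∧ l.1 ≠ l.2)) <;>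
            by_cases c2 : (X l.1 ∈ M ∧ X l.2 ∈ M)
          all_goals first
            | (exfalso
               have : X l.1 ∉ M := by
                 have := e2 ▸ e1.symm
                 rw [Finset.erase_eq_self] at this; exact this
               exact this c2.1)
            | simp_all
        rw [Finset.sum_congr rfl (fun M' _ => summand M'), Finset.sum_add_distrib,
          Finset.sum_ite_eq' Finset.univ M, Finset.sum_ite_eq' Finset.univ (M.erase (X l.1))]
        simp


section helpers

lemma fix_mem_iff {M : Finset (Fin n)} {π : Equiv.Perm (Fin n)}
    (hπ : ∀ c ∉ M, π c = c) : ∀ c, π c ∈ M ↔ c ∈ M := by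
  intro c
  constructor
  · intro h
    by_contra hc
    rw [hπ c hc] at h; exact hc h
  · intro h
    by_contra hc
    have := hπ _ hc
    have := π.injective this
    rw [← this] at h
    exact hc h

lemma fix_inv {M : Finset (Fin n)} {π : Equiv.Perm (Fin n)}
    (hπ : ∀ c ∉ M, π c = c) : ∀ c ∉ M, π⁻¹ c = c := by
  intro c hc
  have := hπ c hc
  conv_lhs => rw [← this]
  simp

end helpers

lemma G_invariant : ∀ (t : ℕ) (M : Finset (Fin n)) (X π : Equiv.Perm (Fin n)),
    (∀ c ∉ M, π c = c) → G n t (π * X, M) = G n t (X, M) := by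
  intro t
  induction t with
  | zero =>
    intro M X π hπ
    rw [G_zero, G_zero]
    by_cases hM : M = ∅
    · subst hM
      have : π = 1 := Equiv.ext fun c => hπ c (Finset.notMem_empty c)
      rw [this, one_mul]
    · rw [if_neg (by simp [hM]), if_neg (by simp [Prod.ext_iff, hM])]
  | succ t ih =>
    intro M X π hπ
    rw [G_succ, G_succ, Finset.sum_add_distrib, Finset.sum_add_distrib]
    have hmem := fix_mem_iff n hπ
    have hπinv := fix_inv n hπ
    have hmeminv := fix_mem_iff n hπinv
    congr 1
    · -- no-mark part: termwise
      refine Finset.sum_congr rfl fun l _ => ?_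
      have hc : ((π * X) l.1 ∈ M ∨ ((π * X) l.2 ∉ M ∧ l.1 ≠ l.2))
          ↔ (X l.1 ∈ M ∨ (X l.2 ∉ M ∧ l.1 ≠ l.2)) := by
        simp only [Equiv.Perm.mul_apply, hmem]
      rw [if_congr hc rfl rfl]
      split_ifs with h
      · rw [mul_assoc]
        exact ih M (X * Equiv.swap l.1 l.2) π hπ
      · rfl
    · -- mark part: reindex letters
      set σ₀ : Equiv.Perm (Fin n) := X⁻¹ * π⁻¹ * X with hσ₀
      have hXσ₀ : ∀ a, X (σ₀ a) = π⁻¹ (X a) := by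
        intro a; simp [hσ₀, Equiv.Perm.mul_apply]
      have hπXσ₀ : ∀ a, (π * X) (σ₀ a) = X a := by
        intro a; simp [Equiv.Perm.mul_apply, hXσ₀]
      -- sum over bijection l ↦ (σ₀ l.1, l.2)
      rw [← Equiv.sum_comp (Equiv.prodCongr σ₀ (Equiv.refl (Fin n)))
        (fun l => if (π * X) l.1 ∈ M ∧ (π * X) l.2 ∈ M then
          G n t ((π * X) * Equiv.swap l.1 l.2, M.erase ((π * X) l.1)) else 0)]
      refine Finset.sum_congr rfl fun l _ => ?_
      simp only [Equiv.prodCongr_apply, Prod.map, Equiv.refl_apply]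
      have hcond : ((π * X) (σ₀ l.1) ∈ M ∧ (π * X) l.2 ∈ M) ↔ (X l.1 ∈ M ∧ X l.2 ∈ M) := by
        rw [hπXσ₀]
        simp only [Equiv.Perm.mul_apply, hmem]
      rw [if_congr hcond rfl rfl]
      split_ifs with h
      · rw [hπXσ₀]
        -- now apply ih with φ
        set φ : Equiv.Perm (Fin n) :=
          (π * X * Equiv.swap (σ₀ l.1) l.2) * (X * Equiv.swap l.1 l.2)⁻¹ with hφ
        have hφmul : φ * (X * Equiv.swap l.1 l.2) = π * X * Equiv.swap (σ₀ l.1) l.2 := by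
          rw [hφ, inv_mul_cancel_right]
        have hφfix : ∀ c ∉ M.erase (X l.1), φ c = c := by
          intro c hc
          have hφc : φ c = (π * X) ((Equiv.swap (σ₀ l.1) l.2) ((Equiv.swap l.1 l.2) (X⁻¹ c))) := by
            simp [hφ, Equiv.Perm.mul_apply, mul_inv_rev]
          by_cases hcX : c = X l.1
          · subst hcX
            rw [hφc]
            rw [(by simp : X⁻¹ (X l.1) = l.1), Equiv.swap_apply_left, Equiv.swap_apply_right]
            exact hπXσ₀ l.1
          · have hcM : c ∉ M := by
              intro hcM'
              exact hc (Finset.mem_erase.mpr ⟨hcX, hcM'⟩)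
            have ha1 : X⁻¹ c ≠ l.1 := by
              intro hh; apply hcX
              rw [← hh]; simp
            have ha2 : X⁻¹ c ≠ l.2 := by
              intro hh
              apply hcM
              have : c = X l.2 := by rw [← hh]; simp
              rw [this]; exact h.2
            have ha3 : X⁻¹ c ≠ σ₀ l.1 := by
              intro hh
              apply hcM
              have : c = X (σ₀ l.1) := by rw [← hh]; simp
              rw [this, hXσ₀]
              exact (hmeminv _).mpr h.1
            rw [hφc, Equiv.swap_apply_of_ne_of_ne ha1 ha2,
              Equiv.swap_apply_of_ne_of_ne ha3 ha2]
            simp only [Equiv.Perm.mul_apply, (by simp : X (X⁻¹ c) = c)]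
            exact hπ c hcM
        calc G n t (π * X * Equiv.swap (σ₀ l.1) l.2, M.erase (X l.1))
            = G n t (φ * (X * Equiv.swap l.1 l.2), M.erase (X l.1)) := by rw [hφmul]
          _ = G n t (X * Equiv.swap l.1 l.2, M.erase (X l.1)) :=
              ih (M.erase (X l.1)) (X * Equiv.swap l.1 l.2) φ hφfix
      · rfl


lemma G_total (t : ℕ) : ∑ s : St n, G n t s = n ^ (2 * t) := by
  induction t with
  | zero =>
    simp [G_zero]
  | succ t ih =>
    have : ∀ s' : St n, ∀ l : Fin n × Fin n,
        (∑ s : St n, if step n s' l = s then G n t s' else 0) = G n t s' := by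
      intro s' l
      rw [Finset.sum_ite_eq Finset.univ (step n s' l) (fun _ => G n t s')]
      simp
    calc ∑ s : St n, G n (t+1) s
        = ∑ s : St n, ∑ l : Fin n × Fin n, ∑ s' : St n,
            if step n s' l = s then G n t s' else 0 := by
          exact Finset.sum_congr rfl fun s _ => G_succ' n t s
      _ = ∑ l : Fin n × Fin n, ∑ s' : St n, ∑ s : St n,
            if step n s' l = s then G n t s' else 0 := by
          rw [Finset.sum_comm]
          exact Finset.sum_congr rfl fun l _ => Finset.sum_comm
      _ = ∑ l : Fin n × Fin n, ∑ s' : St n, G n t s' := by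
          exact Finset.sum_congr rfl fun l _ => Finset.sum_congr rfl fun s' _ => this s' l
      _ = n ^ (2 * (t+1)) := by
          rw [Finset.sum_const, ih]
          simp [Finset.card_univ, mul_comm, mul_add, pow_add, pow_mul]
          ring

def Wtot (t : ℕ) (X : Equiv.Perm (Fin n)) : ℕ := ∑ M : Finset (Fin n), G n t (X, M)

lemma Wtot_zero (X : Equiv.Perm (Fin n)) : Wtot n 0 X = if X = 1 then 1 else 0 := by
  unfold Wtot
  by_cases hX : X = 1
  · subst hX
    rw [Finset.sum_eq_single (∅ : Finset (Fin n))]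
    · simp [G_zero]
    · intro M _ hM; simp [G_zero, hM]
    · simp
  · simp only [if_neg hX]
    refine Finset.sum_eq_zero fun M _ => ?_
    simp [G_zero, Prod.ext_iff, hX]

lemma Wtot_succ (t : ℕ) (X : Equiv.Perm (Fin n)) :
    Wtot n (t+1) X = ∑ l : Fin n × Fin n, Wtot n t (X * Equiv.swap l.1 l.2) := by
  unfold Wtot
  calc ∑ M : Finset (Fin n), G n (t+1) (X, M)
      = ∑ M : Finset (Fin n), ∑ l : Fin n × Fin n, ∑ s' : St n,
          if step n s' l = (X, M) then G n t s' else 0 :=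
        Finset.sum_congr rfl fun M _ => G_succ' n t (X, M)
    _ = ∑ l : Fin n × Fin n, ∑ s' : St n, ∑ M : Finset (Fin n),
          if step n s' l = (X, M) then G n t s' else 0 := by
        rw [Finset.sum_comm]
        exact Finset.sum_congr rfl fun l _ => Finset.sum_comm
    _ = ∑ l : Fin n × Fin n, ∑ s' : St n,
          if s'.1 * Equiv.swap l.1 l.2 = X then G n t s' else 0 := by
        refine Finset.sum_congr rfl fun l _ => Finset.sum_congr rfl fun s' _ => ?_
        by_cases h : s'.1 * Equiv.swap l.1 l.2 = X
        · rw [if_pos h, Finset.sum_eq_single ((step n s' l).2)]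
          · rw [if_pos]
            show step n s' l = (X, (step n s' l).2)
            exact Prod.ext h rfl
          · intro M _ hM
            rw [if_neg]
            intro hc
            exact hM (congrArg Prod.snd hc).symm
          · simp
        · rw [if_neg h]
          refine Finset.sum_eq_zero fun M _ => ?_
          rw [if_neg]
          intro hc
          exact h (congrArg Prod.fst hc)
    _ = ∑ l : Fin n × Fin n, ∑ Y : Equiv.Perm (Fin n), ∑ M' : Finset (Fin n),
          if Y * Equiv.swap l.1 l.2 = X then G n t (Y, M') else 0 := by
        exact Finset.sum_congr rfl fun l _ => Fintype.sum_prod_type _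
    _ = ∑ l : Fin n × Fin n, ∑ M' : Finset (Fin n), G n t (X * Equiv.swap l.1 l.2, M') := by
        refine Finset.sum_congr rfl fun l _ => ?_
        rw [Finset.sum_comm]
        refine Finset.sum_congr rfl fun M' _ => ?_
        have : ∀ Y : Equiv.Perm (Fin n), Y * Equiv.swap l.1 l.2 = X ↔ Y = X * Equiv.swap l.1 l.2 := by
          intro Y
          constructor
          · intro h; rw [← h, mul_assoc, Equiv.swap_mul_self, mul_one]
          · intro h; rw [h, mul_assoc, Equiv.swap_mul_self, mul_one]
        calc ∑ Y : Equiv.Perm (Fin n), (if Y * Equiv.swap l.1 l.2 = X then G n t (Y, M') else 0)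
            = ∑ Y : Equiv.Perm (Fin n), (if Y = X * Equiv.swap l.1 l.2 then G n t (Y, M') else 0) :=
              Finset.sum_congr rfl fun Y _ => if_congr (this Y) rfl rfl
          _ = G n t (X * Equiv.swap l.1 l.2, M') := by
              rw [Finset.sum_ite_eq' Finset.univ (X * Equiv.swap l.1 l.2)
                (fun Y => G n t (Y, M'))]
              simp

lemma matrix_row (t : ℕ) (X : Equiv.Perm (Fin n)) (hn : 0 < n) :
    (rtMatrix n ^ t) 1 X = (Wtot n t X : ℝ) / (n : ℝ) ^ (2 * t) := by
  induction t generalizing X with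
  | zero =>
    rw [pow_zero, Matrix.one_apply, Wtot_zero]
    by_cases h : X = 1
    · simp [h, eq_comm]
    · rw [if_neg (fun hc => h hc.symm), if_neg h]
      simp
  | succ t ih =>
    have hn2 : ((n : ℝ) ^ 2) ≠ 0 := by positivity
    rw [pow_succ, Matrix.mul_apply]
    calc ∑ Y : Equiv.Perm (Fin n), (rtMatrix n ^ t) 1 Y * rtMatrix n Y X
        = ∑ Y : Equiv.Perm (Fin n), ((Wtot n t Y : ℝ) / (n:ℝ)^(2*t))
            * ((∑ l : Fin n × Fin n, if Y * Equiv.swap l.1 l.2 = X then (1:ℝ) else 0) / (n:ℝ)^2) := by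
          refine Finset.sum_congr rfl fun Y _ => ?_
          rw [ih]
          congr 1
          unfold rtMatrix
          congr 1
          rw [Finset.card_filter]
          push_cast
          rfl
      _ = ∑ l : Fin n × Fin n, ∑ Y : Equiv.Perm (Fin n),
            (if Y * Equiv.swap l.1 l.2 = X then (Wtot n t Y : ℝ) else 0) / ((n:ℝ)^(2*t) * (n:ℝ)^2) := by
          rw [Finset.sum_comm]
          refine Finset.sum_congr rfl fun Y _ => ?_
          rw [div_mul_div_comm, Finset.mul_sum, Finset.sum_div]
          refine Finset.sum_congr rfl fun l _ => ?_
          congr 1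
          split_ifs <;> simp
      _ = ∑ l : Fin n × Fin n,
            (Wtot n t (X * Equiv.swap l.1 l.2) : ℝ) / ((n:ℝ)^(2*t) * (n:ℝ)^2) := by
          refine Finset.sum_congr rfl fun l _ => ?_
          rw [← Finset.sum_div]
          congr 1
          have : ∀ Y : Equiv.Perm (Fin n), Y * Equiv.swap l.1 l.2 = X ↔ Y = X * Equiv.swap l.1 l.2 := by
            intro Y
            constructor
            · intro h; rw [← h, mul_assoc, Equiv.swap_mul_self, mul_one]
            · intro h; rw [h, mul_assoc, Equiv.swap_mul_self, mul_one]
          calc ∑ Y : Equiv.Perm (Fin n), (if Y * Equiv.swap l.1 l.2 = X then (Wtot n t Y:ℝ) else 0)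
              = ∑ Y : Equiv.Perm (Fin n), (if Y = X * Equiv.swap l.1 l.2 then (Wtot n t Y:ℝ) else 0) :=
                Finset.sum_congr rfl fun Y _ => if_congr (this Y) rfl rfl
            _ = (Wtot n t (X * Equiv.swap l.1 l.2) : ℝ) := by
                rw [Finset.sum_ite_eq' Finset.univ]
                simp
      _ = (Wtot n (t+1) X : ℝ) / (n : ℝ) ^ (2 * (t+1)) := by
          rw [Wtot_succ, ← Finset.sum_div]
          push_cast
          congr 1
          ring


lemma rtMatrix_translate (σ Y α : Equiv.Perm (Fin n)) :
    rtMatrix n (σ * Y) (σ * α) = rtMatrix n Y α := by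
  unfold rtMatrix
  have h : (Finset.univ.filter (fun ij : Fin n × Fin n => σ * Y * Equiv.swap ij.1 ij.2 = σ * α))
      = (Finset.univ.filter (fun ij : Fin n × Fin n => Y * Equiv.swap ij.1 ij.2 = α)) := by
    apply Finset.filter_congr
    intro l _
    rw [mul_assoc]
    exact ⟨fun h => mul_left_cancel h, fun h => by rw [h]⟩
  rw [h]

lemma row_translate (t : ℕ) (σ α : Equiv.Perm (Fin n)) :
    (rtMatrix n ^ t) σ α = (rtMatrix n ^ t) 1 (σ⁻¹ * α) := by
  induction t generalizing α with
  | zero =>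
    rw [pow_zero, Matrix.one_apply, Matrix.one_apply]
    refine if_congr ?_ rfl rfl
    rw [eq_comm (a := (1 : Equiv.Perm (Fin n))), inv_mul_eq_one]
  | succ t ih =>
    rw [pow_succ, Matrix.mul_apply, Matrix.mul_apply]
    calc ∑ j : Equiv.Perm (Fin n), (rtMatrix n ^ t) σ j * rtMatrix n j α
        = ∑ j : Equiv.Perm (Fin n), (rtMatrix n ^ t) 1 (σ⁻¹ * j) * rtMatrix n j α :=
          Finset.sum_congr rfl fun j _ => by rw [ih]
      _ = ∑ Y : Equiv.Perm (Fin n),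
            (rtMatrix n ^ t) 1 (σ⁻¹ * (σ * Y)) * rtMatrix n (σ * Y) α := by
          rw [← Equiv.sum_comp (Equiv.mulLeft σ)
            (fun j => (rtMatrix n ^ t) 1 (σ⁻¹ * j) * rtMatrix n j α)]
          simp only [Equiv.coe_mulLeft]
      _ = ∑ Y : Equiv.Perm (Fin n), (rtMatrix n ^ t) 1 Y * rtMatrix n Y (σ⁻¹ * α) := by
          refine Finset.sum_congr rfl fun Y _ => ?_
          rw [inv_mul_cancel_left]
          congr 1
          have := rtMatrix_translate n σ Y (σ⁻¹ * α)
          rw [mul_inv_cancel_left] at this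
          rw [← this]


lemma card_preimage (X : Equiv.Perm (Fin n)) (M : Finset (Fin n)) :
    (Finset.univ.filter fun i => X i ∈ M).card = M.card := by
  apply Finset.card_bij (fun i _ => X i)
  · intro a ha
    exact (Finset.mem_filter.mp ha).2
  · intro a ha b hb h
    exact X.injective h
  · intro b hb
    exact ⟨X⁻¹ b, Finset.mem_filter.mpr ⟨Finset.mem_univ _, by simpa using hb⟩, by simp⟩

lemma mark_count (X : Equiv.Perm (Fin n)) (M : Finset (Fin n)) :
    (Finset.univ.filter fun l : Fin n × Fin n =>
      X l.2 ∉ M ∧ (X l.1 ∈ M ∨ l.1 = l.2)).card = (M.card + 1) * (n - M.card) := by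
  rw [Finset.card_filter]
  rw [Fintype.sum_prod_type]
  rw [Finset.sum_comm]
  have inner : ∀ j : Fin n, (∑ i : Fin n, if X j ∉ M ∧ (X i ∈ M ∨ i = j) then 1 else 0)
      = if X j ∉ M then M.card + 1 else 0 := by
    intro j
    by_cases hj : X j ∈ M
    · simp [hj]
    · rw [if_pos hj]
      have : ∀ i : Fin n, (if X j ∉ M ∧ (X i ∈ M ∨ i = j) then 1 else 0)
          = if (X i ∈ M ∨ i = j) then 1 else 0 := by
        intro i
        by_cases h : (X i ∈ M ∨ i = j) <;> simp [h, hj]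
      rw [Finset.sum_congr rfl fun i _ => this i, ← Finset.card_filter]
      have : (Finset.univ.filter fun i => X i ∈ M ∨ i = j)
          = insert j (Finset.univ.filter fun i => X i ∈ M) := by
        ext i
        simp only [Finset.mem_filter, Finset.mem_univ, true_and, Finset.mem_insert]
        tauto
      rw [this, Finset.card_insert_of_notMem (by simp [hj]), card_preimage]
  rw [Finset.sum_congr rfl fun j _ => inner j]
  rw [Finset.sum_ite, Finset.sum_const, Finset.sum_const]
  simp only [smul_eq_mul, mul_zero, add_zero]
  have : (Finset.univ.filter fun j : Fin n => X j ∉ M).card = n - M.card := by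
    have h1 : (Finset.univ.filter fun j : Fin n => X j ∉ M)
        = (Finset.univ.filter fun j : Fin n => X j ∈ M)ᶜ := by
      ext i; simp
    rw [h1, Finset.card_compl, card_preimage]
    simp
  rw [this, mul_comm]

lemma step_card (X : Equiv.Perm (Fin n)) (M : Finset (Fin n)) (l : Fin n × Fin n) :
    ((step n (X, M) l).2).card
      = if X l.2 ∉ M ∧ (X l.1 ∈ M ∨ l.1 = l.2) then M.card + 1 else M.card := by
  show (if X l.2 ∉ M ∧ (X l.1 ∈ M ∨ l.1 = l.2) then insert (X l.2) M else M).card = _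
  split_ifs with h
  · exact Finset.card_insert_of_notMem h.1
  · rfl

/-- the potential function -/
def hfun (k : ℕ) : ℝ := ∑ l ∈ Finset.Ico k n, (n:ℝ)^2 / (((l:ℝ)+1) * ((n:ℝ) - (l:ℝ)))

lemma hfun_term_nonneg {l : ℕ} (hl : l < n) : 0 ≤ (n:ℝ)^2 / (((l:ℝ)+1) * ((n:ℝ) - (l:ℝ))) := by
  have h1 : (0:ℝ) < (l:ℝ) + 1 := by positivity
  have h2 : (0:ℝ) < (n:ℝ) - (l:ℝ) := by
    have : (l:ℝ) < (n:ℝ) := by exact_mod_cast hl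
    linarith
  positivity

lemma hfun_nonneg (k : ℕ) : 0 ≤ hfun n k := by
  apply Finset.sum_nonneg
  intro l hl
  exact hfun_term_nonneg n (Finset.mem_Ico.mp hl).2

lemma hfun_top : hfun n n = 0 := by simp [hfun]

lemma hfun_succ {k : ℕ} (hk : k < n) :
    hfun n k = (n:ℝ)^2 / (((k:ℝ)+1) * ((n:ℝ) - (k:ℝ))) + hfun n (k+1) := by
  unfold hfun
  rw [Finset.sum_eq_sum_Ico_succ_bot hk]

lemma card_letters : (Finset.univ : Finset (Fin n × Fin n)).card = n ^ 2 := by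
  simp [Finset.card_univ, sq]

lemma step_hfun_sum (X : Equiv.Perm (Fin n)) (M : Finset (Fin n)) :
    ∑ l : Fin n × Fin n, hfun n ((step n (X, M) l).2.card)
      = (n:ℝ)^2 * hfun n M.card - (if M.card < n then (n:ℝ)^2 else 0) := by
  have hcard : M.card ≤ n := by
    simpa using Finset.card_le_univ M
  have e1 : ∀ l : Fin n × Fin n, hfun n ((step n (X, M) l).2.card)
      = hfun n M.card + (if X l.2 ∉ M ∧ (X l.1 ∈ M ∨ l.1 = l.2)
          then hfun n (M.card+1) - hfun n M.card else 0) := by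
    intro l
    rw [step_card]
    split_ifs with h
    · ring
    · ring
  rw [Finset.sum_congr rfl fun l _ => e1 l, Finset.sum_add_distrib, Finset.sum_const,
    card_letters n, Finset.sum_ite, Finset.sum_const, Finset.sum_const_zero, add_zero,
    nsmul_eq_mul, nsmul_eq_mul, mark_count n X M]
  rcases lt_or_eq_of_le hcard with hlt | heq
  · rw [if_pos hlt]
    have h1 : (0:ℝ) < (M.card:ℝ) + 1 := by positivity
    have h2 : (0:ℝ) < (n:ℝ) - (M.card:ℝ) := by
      have : (M.card:ℝ) < (n:ℝ) := by exact_mod_cast hlt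
      linarith
    have hcast : (((M.card + 1) * (n - M.card) : ℕ) : ℝ)
        = ((M.card:ℝ) + 1) * ((n:ℝ) - (M.card:ℝ)) := by
      push_cast [Nat.cast_sub hlt.le]
      ring
    have hs := hfun_succ n hlt
    have hdiff : hfun n (M.card+1) - hfun n M.card
        = -((n:ℝ)^2 / (((M.card:ℝ)+1) * ((n:ℝ) - (M.card:ℝ)))) := by
      rw [hs]; ring
    rw [hcast, hdiff]
    have hab : (((M.card:ℝ)+1) * ((n:ℝ) - (M.card:ℝ))) ≠ 0 := by positivity
    have hcancel : (((M.card:ℝ)+1) * ((n:ℝ) - (M.card:ℝ)))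
        * ((n:ℝ)^2 / (((M.card:ℝ)+1) * ((n:ℝ) - (M.card:ℝ)))) = (n:ℝ)^2 :=
      mul_div_cancel₀ _ hab
    push_cast
    push_cast at hcancel
    nlinarith [hcancel]
  · have hz : (M.card + 1) * (n - M.card) = 0 := by rw [heq, Nat.sub_self, mul_zero]
    rw [if_neg (by rw [heq]; exact lt_irrefl n), hz, heq, hfun_top]
    push_cast
    ring


/-- expectation of potential at time `t` (unnormalized) -/
def Phi (t : ℕ) : ℝ := ∑ s : St n, (G n t s : ℝ) * hfun n s.2.card

/-- unnormalized probability that not all cards are marked at time `t` -/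
def Pbad (t : ℕ) : ℝ := ∑ s : St n, (if s.2.card < n then (G n t s : ℝ) else 0)

lemma Pbad_nonneg (t : ℕ) : 0 ≤ Pbad n t := by
  apply Finset.sum_nonneg
  intro s _
  split_ifs
  · positivity
  · exact le_rfl

lemma Phi_nonneg (t : ℕ) : 0 ≤ Phi n t := by
  apply Finset.sum_nonneg
  intro s _
  have := hfun_nonneg n s.2.card
  positivity

lemma Phi_zero : Phi n 0 = hfun n 0 := by
  unfold Phi
  rw [Finset.sum_eq_single ((1, ∅) : St n)]
  · simp [G_zero]
  · intro s _ hs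
    simp [G_zero, hs]
  · simp

/-- generic collapse: expectation of `f` at `t+1` -/
lemma exp_succ (t : ℕ) (f : St n → ℝ) :
    ∑ s : St n, (G n (t+1) s : ℝ) * f s
      = ∑ s' : St n, (G n t s' : ℝ) * ∑ l : Fin n × Fin n, f (step n s' l) := by
  calc ∑ s : St n, (G n (t+1) s : ℝ) * f s
      = ∑ s : St n, ∑ l : Fin n × Fin n, ∑ s' : St n,
          (if step n s' l = s then (G n t s' : ℝ) else 0) * f s := by
        refine Finset.sum_congr rfl fun s _ => ?_
        rw [G_succ']
        push_cast
        rw [Finset.sum_mul]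
        refine Finset.sum_congr rfl fun l _ => ?_
        rw [Finset.sum_mul]
    _ = ∑ l : Fin n × Fin n, ∑ s' : St n, ∑ s : St n,
          (if step n s' l = s then (G n t s' : ℝ) else 0) * f s := by
        rw [Finset.sum_comm]
        exact Finset.sum_congr rfl fun l _ => Finset.sum_comm
    _ = ∑ l : Fin n × Fin n, ∑ s' : St n, (G n t s' : ℝ) * f (step n s' l) := by
        refine Finset.sum_congr rfl fun l _ => Finset.sum_congr rfl fun s' _ => ?_
        rw [Finset.sum_eq_single (step n s' l)]
        · rw [if_pos rfl]
        · intro s _ hs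
          have hne : step n s' l ≠ s := fun hc => hs hc.symm
          rw [if_neg hne, zero_mul]
        · simp
    _ = _ := by
        rw [Finset.sum_comm]
        refine Finset.sum_congr rfl fun s' _ => ?_
        rw [Finset.mul_sum]

lemma Phi_succ (t : ℕ) : Phi n (t+1) = (n:ℝ)^2 * Phi n t - (n:ℝ)^2 * Pbad n t := by
  unfold Phi
  rw [exp_succ]
  have : ∀ s' : St n, (G n t s' : ℝ) * ∑ l : Fin n × Fin n, hfun n ((step n s' l).2.card)
      = (n:ℝ)^2 * ((G n t s' : ℝ) * hfun n s'.2.card)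
        - (n:ℝ)^2 * (if s'.2.card < n then (G n t s' : ℝ) else 0) := by
    intro s'
    have := step_hfun_sum n s'.1 s'.2
    rw [show ((s'.1, s'.2) : St n) = s' from rfl] at this
    rw [this]
    split_ifs with h
    · ring
    · ring
  rw [Finset.sum_congr rfl fun s' _ => this s']
  rw [Finset.sum_sub_distrib, ← Finset.mul_sum, ← Finset.mul_sum]
  rfl

lemma Pbad_succ_le (t : ℕ) : Pbad n (t+1) ≤ (n:ℝ)^2 * Pbad n t := by
  unfold Pbad
  have e : ∀ s : St n, (if s.2.card < n then (G n (t+1) s : ℝ) else 0)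
      = (G n (t+1) s : ℝ) * (if s.2.card < n then (1:ℝ) else 0) := by
    intro s; split_ifs <;> simp
  rw [Finset.sum_congr rfl fun s _ => e s, exp_succ]
  have bound : ∀ s' : St n, (G n t s' : ℝ) * ∑ l : Fin n × Fin n,
        (if (step n s' l).2.card < n then (1:ℝ) else 0)
      ≤ (n:ℝ)^2 * (if s'.2.card < n then (G n t s' : ℝ) else 0) := by
    intro s'
    by_cases h : s'.2.card < n
    · rw [if_pos h]
      have hle : ∑ l : Fin n × Fin n, (if (step n s' l).2.card < n then (1:ℝ) else 0)
          ≤ ∑ l : Fin n × Fin n, (1:ℝ) := by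
        apply Finset.sum_le_sum
        intro l _
        split_ifs <;> norm_num
      have : ∑ l : Fin n × Fin n, (1:ℝ) = (n:ℝ)^2 := by
        rw [Finset.sum_const, card_letters n]
        push_cast
        ring
      rw [this] at hle
      calc (G n t s' : ℝ) * ∑ l : Fin n × Fin n, (if (step n s' l).2.card < n then (1:ℝ) else 0)
          ≤ (G n t s' : ℝ) * (n:ℝ)^2 := by
            apply mul_le_mul_of_nonneg_left hle
            positivity
        _ = (n:ℝ)^2 * (G n t s' : ℝ) := by ring
    · rw [if_neg h]
      have hall : ∀ l : Fin n × Fin n, ((step n s' l).2.card < n) = False := by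
        intro l
        have : s'.2.card ≤ (step n s' l).2.card := by
          have := step_card n s'.1 s'.2 l
          rw [show ((s'.1, s'.2) : St n) = s' from rfl] at this
          rw [this]
          split_ifs <;> omega
        simp only [eq_iff_iff, iff_false, not_lt]
        omega
      simp only [hall, if_false, mul_zero]
      simp
  calc ∑ s' : St n, (G n t s' : ℝ) * ∑ l : Fin n × Fin n,
          (if (step n s' l).2.card < n then (1:ℝ) else 0)
      ≤ ∑ s' : St n, (n:ℝ)^2 * (if s'.2.card < n then (G n t s' : ℝ) else 0) :=
        Finset.sum_le_sum fun s' _ => bound s'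
    _ = (n:ℝ)^2 * ∑ s' : St n, (if s'.2.card < n then (G n t s' : ℝ) else 0) := by
        rw [Finset.mul_sum]

lemma key_bound (t : ℕ) : Phi n t + (t:ℝ) * Pbad n t ≤ ((n:ℝ)^2)^t * hfun n 0 := by
  induction t with
  | zero =>
    rw [Phi_zero]
    simp
  | succ t ih =>
    have h1 := Phi_succ n t
    have h2 := Pbad_succ_le n t
    have h3 := Pbad_nonneg n (t+1)
    have h4 := Phi_nonneg n t
    have hn2 : (0:ℝ) ≤ (n:ℝ)^2 := by positivity
    calc Phi n (t+1) + ((t+1 : ℕ):ℝ) * Pbad n (t+1)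
        = (n:ℝ)^2 * Phi n t - (n:ℝ)^2 * Pbad n t + ((t:ℝ)+1) * Pbad n (t+1) := by
          rw [h1]; push_cast; ring
      _ ≤ (n:ℝ)^2 * Phi n t - (n:ℝ)^2 * Pbad n t + ((t:ℝ)+1) * ((n:ℝ)^2 * Pbad n t) := by
          have ht1 : (0:ℝ) ≤ (t:ℝ) + 1 := by positivity
          nlinarith [mul_le_mul_of_nonneg_left h2 ht1]
      _ = (n:ℝ)^2 * (Phi n t + (t:ℝ) * Pbad n t) := by ring
      _ ≤ (n:ℝ)^2 * (((n:ℝ)^2)^t * hfun n 0) := by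
          apply mul_le_mul_of_nonneg_left ih hn2
      _ = ((n:ℝ)^2)^(t+1) * hfun n 0 := by ring

lemma Pbad_le (t : ℕ) (ht : 0 < t) : Pbad n t ≤ ((n:ℝ)^2)^t * hfun n 0 / t := by
  have h := key_bound n t
  have h4 := Phi_nonneg n t
  have htpos : (0:ℝ) < (t:ℝ) := by exact_mod_cast ht
  rw [le_div_iff₀ htpos]
  nlinarith


lemma harmonic_le : ∀ m : ℕ, 1 ≤ m →
    ∑ l ∈ Finset.range m, 1/((l:ℝ)+1) ≤ 1 + Real.log m := by
  intro m hm
  induction m with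
  | zero => omega
  | succ m ih =>
    rcases Nat.eq_or_lt_of_le hm with h1 | h1
    · simp [← h1]
    · have hm1 : 1 ≤ m := by omega
      have hmpos : (0:ℝ) < m := by exact_mod_cast hm1
      have hm1pos : (0:ℝ) < (m:ℝ) + 1 := by positivity
      rw [Finset.sum_range_succ]
      have hlog : Real.log m - Real.log (m+1) ≤ -(1/((m:ℝ)+1)) := by
        have hx : (0:ℝ) < (m:ℝ)/((m:ℝ)+1) := by positivity
        have := Real.log_le_sub_one_of_pos hx
        rw [Real.log_div (ne_of_gt hmpos) (ne_of_gt hm1pos)] at this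
        have heq : (m:ℝ)/((m:ℝ)+1) - 1 = -(1/((m:ℝ)+1)) := by
          field_simp
          ring
        rw [heq] at this
        exact this
      have := ih hm1
      push_cast
      push_cast at this
      linarith

lemma hfun_zero_le (hn : 1 ≤ n) :
    hfun n 0 ≤ 2 * (n:ℝ) * (1 + Real.log n) := by
  have hnpos : (0:ℝ) < n := by exact_mod_cast hn
  have hterm : ∀ l ∈ Finset.range n,
      (n:ℝ)^2 / (((l:ℝ)+1) * ((n:ℝ) - (l:ℝ)))
        = (n:ℝ)^2/((n:ℝ)+1) * (1/((l:ℝ)+1) + 1/((n:ℝ)-(l:ℝ))) := by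
    intro l hl
    have hl' : l < n := Finset.mem_range.mp hl
    have h1 : (0:ℝ) < (l:ℝ) + 1 := by positivity
    have h2 : (0:ℝ) < (n:ℝ) - (l:ℝ) := by
      have : (l:ℝ) < (n:ℝ) := by exact_mod_cast hl'
      linarith
    field_simp
    ring
  have hrefl : ∑ l ∈ Finset.range n, 1/((n:ℝ)-(l:ℝ)) = ∑ l ∈ Finset.range n, 1/((l:ℝ)+1) := by
    rw [← Finset.sum_range_reflect (fun l => 1/((l:ℝ)+1)) n]
    refine Finset.sum_congr rfl fun j hj => ?_
    have hj' : j < n := Finset.mem_range.mp hj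
    congr 1
    have : (↑(n - 1 - j) : ℝ) = (n:ℝ) - 1 - (j:ℝ) := by
      have : n - 1 - j = n - (1 + j) := by omega
      rw [this, Nat.cast_sub (by omega)]
      push_cast
      ring
    rw [this]
    ring
  have hfun0 : hfun n 0 = ∑ l ∈ Finset.range n, (n:ℝ)^2 / (((l:ℝ)+1) * ((n:ℝ) - (l:ℝ))) := by
    unfold hfun
    rw [Finset.range_eq_Ico]
  rw [hfun0, Finset.sum_congr rfl hterm, ← Finset.mul_sum, Finset.sum_add_distrib, hrefl]
  have hH := harmonic_le n hn
  have hHnonneg : 0 ≤ ∑ l ∈ Finset.range n, 1/((l:ℝ)+1) := by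
    apply Finset.sum_nonneg; intro l _; positivity
  have hfrac : (n:ℝ)^2/((n:ℝ)+1) ≤ (n:ℝ) := by
    rw [div_le_iff₀ (by positivity)]
    nlinarith
  have hlogn : 0 ≤ 1 + Real.log n := by
    have : (1:ℝ) ≤ n := by exact_mod_cast hn
    have := Real.log_nonneg this
    linarith
  calc (n:ℝ)^2/((n:ℝ)+1) * (∑ l ∈ Finset.range n, 1/((l:ℝ)+1) + ∑ l ∈ Finset.range n, 1/((l:ℝ)+1))
      ≤ (n:ℝ) * (∑ l ∈ Finset.range n, 1/((l:ℝ)+1) + ∑ l ∈ Finset.range n, 1/((l:ℝ)+1)) := by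
        apply mul_le_mul_of_nonneg_right hfrac
        linarith
    _ ≤ (n:ℝ) * ((1 + Real.log n) + (1 + Real.log n)) := by
        apply mul_le_mul_of_nonneg_left _ (le_of_lt hnpos)
        linarith
    _ = 2 * (n:ℝ) * (1 + Real.log n) := by ring

lemma log_two_ge : (1/2 : ℝ) ≤ Real.log 2 := by
  rw [Real.le_log_iff_exp_le (by norm_num)]
  have hsq : Real.exp (1/2) * Real.exp (1/2) = Real.exp 1 := by
    rw [← Real.exp_add]; norm_num
  have he := Real.exp_one_lt_d9
  have hp := Real.exp_pos (1/2 : ℝ)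
  nlinarith

lemma hfun_zero_le' (hn : 2 ≤ n) : hfun n 0 ≤ 6 * (n:ℝ) * Real.log n := by
  have h1 := hfun_zero_le n (by omega)
  have hlog2 : (1/2:ℝ) ≤ Real.log n := by
    calc (1/2:ℝ) ≤ Real.log 2 := log_two_ge
      _ ≤ Real.log n := Real.log_le_log (by norm_num) (by exact_mod_cast hn)
  have hnpos : (0:ℝ) < n := by positivity
  nlinarith


lemma G_univ_const (t : ℕ) (X : Equiv.Perm (Fin n)) :
    G n t (X, Finset.univ) = G n t (1, Finset.univ) := by
  have := G_invariant n t Finset.univ 1 X (fun c hc => absurd (Finset.mem_univ c) hc)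
  rwa [mul_one] at this

lemma mass_split (t : ℕ) :
    ((n:ℝ)) ^ (2*t) = Pbad n t + (n.factorial : ℝ) * (G n t (1, Finset.univ) : ℝ) := by
  have h1 : ((n ^ (2*t) : ℕ) : ℝ) = ∑ s : St n, (G n t s : ℝ) := by
    rw [← G_total n t]; push_cast; rfl
  have h2 : ∀ s : St n, (G n t s : ℝ)
      = (if s.2.card < n then (G n t s : ℝ) else 0)
        + (if s.2.card < n then 0 else (G n t s : ℝ)) := by
    intro s; split_ifs <;> ring
  have h3 : ∑ s : St n, (if s.2.card < n then (0:ℝ) else (G n t s : ℝ))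
      = (n.factorial : ℝ) * (G n t (1, Finset.univ) : ℝ) := by
    rw [Fintype.sum_prod_type]
    have inner : ∀ X : Equiv.Perm (Fin n),
        (∑ M : Finset (Fin n), if M.card < n then (0:ℝ) else (G n t (X, M) : ℝ))
          = (G n t (1, Finset.univ) : ℝ) := by
      intro X
      rw [Finset.sum_eq_single (Finset.univ : Finset (Fin n))]
      · rw [if_neg (by simp [Finset.card_univ])]
        exact_mod_cast G_univ_const n t X
      · intro M _ hM
        rw [if_pos]
        have hle : M.card ≤ n := by simpa using Finset.card_le_univ M
        rcases lt_or_eq_of_le hle with h | h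
        · exact h
        · exfalso
          apply hM
          have : M.card = Fintype.card (Fin n) := by simpa using h
          exact Finset.card_eq_iff_eq_univ M |>.mp this
      · simp
    rw [Finset.sum_congr rfl fun X _ => inner X, Finset.sum_const, Finset.card_univ,
      Fintype.card_perm, Fintype.card_fin, nsmul_eq_mul]
  calc ((n:ℝ)) ^ (2*t) = ((n ^ (2*t) : ℕ) : ℝ) := by push_cast; rfl
    _ = ∑ s : St n, (G n t s : ℝ) := h1
    _ = Pbad n t + (n.factorial : ℝ) * (G n t (1, Finset.univ) : ℝ) := by
        rw [Finset.sum_congr rfl fun s _ => h2 s, Finset.sum_add_distrib, h3]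
        rfl

lemma row_sum (t : ℕ) (σ : Equiv.Perm (Fin n)) (hn : 0 < n) :
    ∑ α : Equiv.Perm (Fin n), (rtMatrix n ^ t) σ α = 1 := by
  have hN : ((n:ℝ)) ^ (2*t) ≠ 0 := by positivity
  calc ∑ α : Equiv.Perm (Fin n), (rtMatrix n ^ t) σ α
      = ∑ α : Equiv.Perm (Fin n), (rtMatrix n ^ t) 1 (σ⁻¹ * α) :=
        Finset.sum_congr rfl fun α _ => row_translate n t σ α
    _ = ∑ β : Equiv.Perm (Fin n), (rtMatrix n ^ t) 1 β := by
        have := Equiv.sum_comp (Equiv.mulLeft σ⁻¹) (fun β => (rtMatrix n ^ t) 1 β)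
        simpa using this
    _ = ∑ β : Equiv.Perm (Fin n), (Wtot n t β : ℝ) / (n : ℝ) ^ (2 * t) :=
        Finset.sum_congr rfl fun β _ => matrix_row n t β hn
    _ = (∑ β : Equiv.Perm (Fin n), ∑ M : Finset (Fin n), (G n t (β, M) : ℝ)) / (n:ℝ)^(2*t) := by
        rw [← Finset.sum_div]
        congr 1
        refine Finset.sum_congr rfl fun β _ => ?_
        unfold Wtot
        push_cast
        rfl
    _ = 1 := by
        have hsp : (∑ β : Equiv.Perm (Fin n), ∑ M : Finset (Fin n), ((G n t (β, M) : ℕ) : ℝ))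
            = ∑ s : St n, (G n t s : ℝ) := (Fintype.sum_prod_type (f := fun s : St n => (G n t s : ℝ))).symm
        rw [hsp]
        have : ∑ s : St n, (G n t s : ℝ) = ((n ^ (2*t) : ℕ) : ℝ) := by
          rw [← G_total n t]; push_cast; rfl
        rw [this]
        push_cast
        field_simp

lemma row_ge (t : ℕ) (σ α : Equiv.Perm (Fin n)) (hn : 0 < n) :
    (1 - Pbad n t / (n:ℝ)^(2*t)) / (n.factorial : ℝ) ≤ (rtMatrix n ^ t) σ α := by
  have hN : (0:ℝ) < ((n:ℝ)) ^ (2*t) := by positivity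
  have hF : (0:ℝ) < (n.factorial : ℝ) := by exact_mod_cast n.factorial_pos
  rw [row_translate, matrix_row n t _ hn]
  have hW : (G n t (1, Finset.univ) : ℝ) ≤ (Wtot n t (σ⁻¹ * α) : ℝ) := by
    rw [← G_univ_const n t (σ⁻¹ * α)]
    unfold Wtot
    exact_mod_cast Finset.single_le_sum (f := fun M => G n t (σ⁻¹ * α, M))
      (fun M _ => Nat.zero_le _) (Finset.mem_univ Finset.univ)
  have hmass := mass_split n t
  rw [div_le_div_iff₀ hF hN]
  calc (1 - Pbad n t / (n:ℝ)^(2*t)) * (n:ℝ)^(2*t)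
      = (n:ℝ)^(2*t) - Pbad n t := by
        field_simp
    _ = (n.factorial : ℝ) * (G n t (1, Finset.univ) : ℝ) := by linarith
    _ ≤ (Wtot n t (σ⁻¹ * α) : ℝ) * (n.factorial : ℝ) := by
        nlinarith

lemma tv_le (t : ℕ) (σ : Equiv.Perm (Fin n)) (hn : 0 < n) :
    tvDist ((rtMatrix n ^ t) σ) (rtPi n) ≤ Pbad n t / (n:ℝ)^(2*t) := by
  set q := Pbad n t / (n:ℝ)^(2*t) with hq
  have hqnn : 0 ≤ q := by
    apply div_nonneg (Pbad_nonneg n t)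
    positivity
  set u := ((n.factorial : ℝ))⁻¹ with hu
  have hF : (0:ℝ) < (n.factorial : ℝ) := by exact_mod_cast n.factorial_pos
  have hunn : 0 ≤ u := by positivity
  have hfu : (n.factorial : ℝ) * u = 1 := by
    rw [hu]; exact mul_inv_cancel₀ (ne_of_gt hF)
  have husum : ∑ _α : Equiv.Perm (Fin n), u = 1 := by
    rw [Finset.sum_const, Finset.card_univ, Fintype.card_perm, Fintype.card_fin, nsmul_eq_mul]
    exact hfu
  have hptwise : ∀ α : Equiv.Perm (Fin n),
      |(rtMatrix n ^ t) σ α - u| ≤ ((rtMatrix n ^ t) σ α - u) + 2 * q * u := by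
    intro α
    have h1 := row_ge n t σ α hn
    have h2 : (1 - q) / (n.factorial : ℝ) = u - q * u := by
      rw [hu, div_eq_mul_inv]; ring
    rw [h2] at h1
    rw [abs_le]
    constructor
    · nlinarith
    · nlinarith
  have hsum : ∑ α : Equiv.Perm (Fin n), |(rtMatrix n ^ t) σ α - u|
      ≤ ∑ α : Equiv.Perm (Fin n), (((rtMatrix n ^ t) σ α - u) + 2 * q * u) :=
    Finset.sum_le_sum fun α _ => hptwise α
  have heval : ∑ α : Equiv.Perm (Fin n), (((rtMatrix n ^ t) σ α - u) + 2 * q * u) = 2 * q := by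
    rw [Finset.sum_add_distrib, Finset.sum_sub_distrib, row_sum n t σ hn, husum]
    rw [Finset.sum_const, Finset.card_univ, Fintype.card_perm, Fintype.card_fin, nsmul_eq_mul]
    have : ((Nat.factorial n : ℕ) : ℝ) * (2 * q * u) = 2 * q := by
      have : ((Nat.factorial n : ℕ) : ℝ) * (2 * q * u)
          = 2 * q * ((n.factorial : ℝ) * u) := by ring
      rw [this, hfu, mul_one]
    rw [this]
    ring
  unfold tvDist rtPi
  rw [div_le_iff₀ (by norm_num : (0:ℝ) < 2)]
  calc ∑ α : Equiv.Perm (Fin n), |(rtMatrix n ^ t) σ α - u| ≤ 2 * q := le_trans hsum (le_of_eq heval)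
    _ = q * 2 := by ring


end RTWork

open RTWork in
/-- There is a universal constant `C` such that for all `n ≥ 2` the mixing time of the
random transposition walk on `S_n` is at most `C n log n`. -/
theorem random_transposition_mixing_time :
    ∃ C : ℝ, ∀ n : ℕ, 2 ≤ n →
      ((sInf {t : ℕ | ∀ σ : Equiv.Perm (Fin n),
          tvDist ((rtMatrix n ^ t) σ) (rtPi n) ≤ 1 / 4} : ℕ) : ℝ) ≤ C * n * Real.log n := by
  use 25
  intro n hn
  have hn0 : 0 < n := by omega
  have hnR : (2:ℝ) ≤ (n:ℝ) := by exact_mod_cast hn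
  have hlogn : (1/2 : ℝ) ≤ Real.log n :=
    le_trans log_two_ge (Real.log_le_log (by norm_num) hnR)
  have hnlogn : (1:ℝ) ≤ (n:ℝ) * Real.log n := by nlinarith
  set x := (24:ℝ) * n * Real.log n with hx
  have hxpos : (0:ℝ) < x := by nlinarith
  set t := ⌈x⌉₊ with ht
  have htpos : 0 < t := Nat.ceil_pos.mpr hxpos
  have htx : x ≤ (t:ℝ) := Nat.le_ceil x
  have htub : (t:ℝ) ≤ x + 1 := le_of_lt (Nat.ceil_lt_add_one (le_of_lt hxpos))
  -- q bound
  have hq : Pbad n t / (n:ℝ)^(2*t) ≤ 1/4 := by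
    have hN : (0:ℝ) < ((n:ℝ)^2)^t := by positivity
    have h2 : ((n:ℝ))^(2*t) = ((n:ℝ)^2)^t := by rw [pow_mul]
    have h1 := Pbad_le n t htpos
    have h3 : hfun n 0 ≤ 6 * (n:ℝ) * Real.log n := hfun_zero_le' n hn
    have htR : (0:ℝ) < (t:ℝ) := by exact_mod_cast htpos
    rw [h2, div_le_iff₀ hN]
    have h5 : 6 * (n:ℝ) * Real.log n ≤ (t:ℝ)/4 := by
      have hxx : x = 24 * ((n:ℝ) * Real.log n) := by rw [hx]; ring
      nlinarith
    have key : ((n:ℝ)^2)^t * hfun n 0 / t ≤ 1/4 * ((n:ℝ)^2)^t := by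
      rw [div_le_iff₀ htR]
      nlinarith [mul_le_mul_of_nonneg_left (le_trans h3 h5) hN.le]
    linarith [le_trans h1 key]
  have hmem : t ∈ {t : ℕ | ∀ σ : Equiv.Perm (Fin n),
      tvDist ((rtMatrix n ^ t) σ) (rtPi n) ≤ 1 / 4} := by
    intro σ
    exact le_trans (tv_le n t σ hn0) hq
  have hinf := Nat.sInf_le hmem
  have : ((sInf {t : ℕ | ∀ σ : Equiv.Perm (Fin n),
      tvDist ((rtMatrix n ^ t) σ) (rtPi n) ≤ 1 / 4} : ℕ) : ℝ) ≤ (t:ℝ) := by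
    exact_mod_cast hinf
  calc ((sInf {t : ℕ | ∀ σ : Equiv.Perm (Fin n),
      tvDist ((rtMatrix n ^ t) σ) (rtPi n) ≤ 1 / 4} : ℕ) : ℝ)
      ≤ (t:ℝ) := this
    _ ≤ x + 1 := htub
    _ ≤ 25 * n * Real.log n := by rw [hx]; nlinarith



end
end

section
/- For every n ≥ 1 and every t ≥ 0, max_{α ∈ S_n} ‖P̄^t(α,·) − π̄‖_TV ≤ max_{σ ∈ 𝒫_n} ‖P^t(σ,·) − π‖_TV; that is, the distance to stationarity of the random transposition walk is bounded by the distance to stationarity of the split-merge chain. -/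
noncomputable section
open scoped BigOperators Classical

namespace SM
open Equiv Equiv.Perm Function Finset Multiset

variable {n : ℕ}

lemma iterate_pow (σ : Equiv.Perm (Fin n)) (k : ℕ) (v : Fin n) : (⇑σ)^[k] v = (σ ^ k) v := by
  rw [Equiv.Perm.iterate_eq_pow]

lemma mem_periodicPts (σ : Equiv.Perm (Fin n)) (v : Fin n) : v ∈ Function.periodicPts ⇑σ := by
  refine ⟨orderOf σ, orderOf_pos σ, ?_⟩
  show (⇑σ)^[orderOf σ] v = v
  rw [iterate_pow, pow_orderOf_eq_one]; rfl

lemma cycLen_pos (σ : Equiv.Perm (Fin n)) (v : Fin n) : 0 < cycLen σ v :=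
  Function.minimalPeriod_pos_of_mem_periodicPts (mem_periodicPts σ v)

lemma pow_cycLen (σ : Equiv.Perm (Fin n)) (v : Fin n) : (σ ^ cycLen σ v) v = v := by
  rw [← iterate_pow]; exact Function.iterate_minimalPeriod

lemma isPeriodicPt_iff (σ : Equiv.Perm (Fin n)) (m : ℕ) (v : Fin n) :
    Function.IsPeriodicPt ⇑σ m v ↔ (σ ^ m) v = v := by
  unfold Function.IsPeriodicPt Function.IsFixedPt
  rw [iterate_pow]

lemma pow_eq_self_iff (σ : Equiv.Perm (Fin n)) (m : ℕ) (v : Fin n) :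
    (σ ^ m) v = v ↔ cycLen σ v ∣ m := by
  rw [← isPeriodicPt_iff]; exact Function.isPeriodicPt_iff_minimalPeriod_dvd

lemma pow_ne_self (σ : Equiv.Perm (Fin n)) {m : ℕ} {v : Fin n} (h0 : 0 < m)
    (h1 : m < cycLen σ v) : (σ ^ m) v ≠ v := by
  intro h
  rw [pow_eq_self_iff] at h
  exact absurd (Nat.le_of_dvd h0 h) (not_le.2 h1)

lemma pow_inj (σ : Equiv.Perm (Fin n)) {v : Fin n} {k l : ℕ} (hk : k < cycLen σ v)
    (hl : l < cycLen σ v) (h : (σ ^ k) v = (σ ^ l) v) : k = l := by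
  have := Function.iterate_injOn_Iio_minimalPeriod (f := ⇑σ) (x := v)
  refine this (Set.mem_Iio.2 hk) (Set.mem_Iio.2 hl) ?_
  show (⇑σ)^[k] v = (⇑σ)^[l] v
  rw [iterate_pow, iterate_pow]; exact h

lemma cycLen_eq_of_sameCycle {σ : Equiv.Perm (Fin n)} {v w : Fin n}
    (h : σ.SameCycle v w) : cycLen σ w = cycLen σ v := by
  obtain ⟨k, _, rfl⟩ := h.exists_pow_eq'
  show Function.minimalPeriod ⇑σ ((σ ^ k) v) = _
  rw [← iterate_pow]
  exact Function.minimalPeriod_apply_iterate (mem_periodicPts σ v) k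

lemma sameCycle_iff_exists_lt {σ : Equiv.Perm (Fin n)} {v w : Fin n} :
    σ.SameCycle v w ↔ ∃ k < cycLen σ v, (σ ^ k) v = w := by
  constructor
  · intro h
    obtain ⟨k, _, rfl⟩ := h.exists_pow_eq'
    refine ⟨k % cycLen σ v, Nat.mod_lt _ (cycLen_pos σ v), ?_⟩
    rw [← iterate_pow, ← iterate_pow]
    exact Function.iterate_mod_minimalPeriod_eq
  · rintro ⟨k, _, rfl⟩
    exact ⟨(k : ℤ), by rw [zpow_natCast]⟩

lemma sameCycle_pow (σ : Equiv.Perm (Fin n)) (v : Fin n) (k : ℕ) :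
    σ.SameCycle v ((σ ^ k) v) := ⟨(k : ℤ), by rw [zpow_natCast]⟩

/-- the orbit of `v` under `σ` as a finset -/
def orb (σ : Equiv.Perm (Fin n)) (v : Fin n) : Finset (Fin n) :=
  Finset.univ.filter (fun w => σ.SameCycle v w)

lemma mem_orb {σ : Equiv.Perm (Fin n)} {v w : Fin n} :
    w ∈ orb σ v ↔ σ.SameCycle v w := by simp [orb]

lemma orb_eq_image (σ : Equiv.Perm (Fin n)) (v : Fin n) :
    orb σ v = (Finset.range (cycLen σ v)).image (fun k => (σ ^ k) v) := by
  ext w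
  simp only [mem_orb, Finset.mem_image, Finset.mem_range]
  rw [sameCycle_iff_exists_lt]

lemma card_orb (σ : Equiv.Perm (Fin n)) (v : Fin n) : (orb σ v).card = cycLen σ v := by
  rw [orb_eq_image, Finset.card_image_of_injOn, Finset.card_range]
  intro k hk l hl h
  exact pow_inj σ (Finset.mem_range.1 (Finset.mem_coe.1 hk))
    (Finset.mem_range.1 (Finset.mem_coe.1 hl)) h

lemma cycLen_eq_of_pow_eq {τ : Equiv.Perm (Fin n)} {x : Fin n} {L : ℕ} (hL : 0 < L)
    (hper : (τ ^ L) x = x) (hmin : ∀ s, 0 < s → s < L → (τ ^ s) x ≠ x) :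
    cycLen τ x = L := by
  have hp : Function.IsPeriodicPt ⇑τ L x := (isPeriodicPt_iff τ L x).2 hper
  have h1 : cycLen τ x ≤ L := hp.minimalPeriod_le hL
  have h2 : (τ ^ cycLen τ x) x = x := pow_cycLen τ x
  rcases lt_or_eq_of_le h1 with h | h
  · exact absurd h2 (hmin _ (cycLen_pos τ x) h)
  · exact h

lemma cycLen_congr {σ τ : Equiv.Perm (Fin n)} {v : Fin n}
    (h : ∀ k : ℕ, (τ ^ k) v = (σ ^ k) v) : cycLen τ v = cycLen σ v := by
  apply Function.minimalPeriod_eq_minimalPeriod_iff.2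
  intro m
  rw [isPeriodicPt_iff, isPeriodicPt_iff, h m]


/-! ### Stage 2: multiplying by a swap -/

variable {σ : Equiv.Perm (Fin n)} {i j : Fin n}

lemma tau_apply (σ : Equiv.Perm (Fin n)) (i j v : Fin n) :
    (σ * Equiv.swap i j) v = σ (Equiv.swap i j v) := rfl

lemma tau_apply_of_ne {v : Fin n} (hvi : v ≠ i) (hvj : v ≠ j) :
    (σ * Equiv.swap i j) v = σ v := by
  rw [tau_apply, Equiv.swap_apply_of_ne_of_ne hvi hvj]

/-- Chain lemma: iterates of `τ = σ * swap i j` follow iterates of `σ` as long as the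
trajectory avoids `i` and `j`. -/
lemma chain {x y : Fin n} {c L : ℕ}
    (h1 : (σ * Equiv.swap i j) x = (σ ^ (c + 1)) y)
    (havoid : ∀ m, c + 1 ≤ m → m ≤ c + L - 1 → (σ ^ m) y ≠ i ∧ (σ ^ m) y ≠ j) :
    ∀ s, 1 ≤ s → s ≤ L → ((σ * Equiv.swap i j) ^ s) x = (σ ^ (c + s)) y := by
  intro s hs1 hsL
  induction s with
  | zero => omega
  | succ s ih =>
    rcases Nat.eq_or_lt_of_le hs1 with h | h
    · simpa [← h] using h1
    · have hs : 1 ≤ s := by omega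
      have hsL' : s ≤ L := by omega
      have ihs := ih hs hsL'
      have havoid' : (σ ^ (c + s)) y ≠ i ∧ (σ ^ (c + s)) y ≠ j := by
        refine havoid (c + s) (by omega) (by omega)
      rw [pow_succ', Equiv.Perm.mul_apply, ihs, tau_apply_of_ne havoid'.1 havoid'.2,
        ← Equiv.Perm.mul_apply, ← pow_succ', show c + s + 1 = c + (s + 1) from by omega]

section Split
variable (hij : i ≠ j) {r : ℕ} (hr1 : 1 ≤ r) (hra : r < cycLen σ i) (hrj : (σ ^ r) i = j)

local notation "a" => cycLen σ i
local notation "τ" => σ * Equiv.swap i j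

include hij hr1 hra hrj

lemma split_pow_i : ∀ s, 1 ≤ s → s ≤ a - r → (τ ^ s) i = (σ ^ (r + s)) i := by
  apply chain
  · rw [tau_apply, Equiv.swap_apply_left, ← hrj, ← Equiv.Perm.mul_apply, ← pow_succ']
  · intro m hm1 hm2
    constructor
    · exact pow_ne_self σ (by omega) (by omega)
    · rw [← hrj]; intro h; have := pow_inj σ (by omega : m < a) hra h; omega

lemma split_pow_j : ∀ s, 1 ≤ s → s ≤ r → (τ ^ s) j = (σ ^ s) i := by
  have := chain (σ := σ) (i := i) (j := j) (x := j) (y := i) (c := 0) (L := r)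
    (by rw [tau_apply, Equiv.swap_apply_right, pow_one])
    (by intro m hm1 hm2
        constructor
        · exact pow_ne_self σ (by omega) (by omega)
        · rw [← hrj]; intro h; have := pow_inj σ (by omega : m < a) hra h; omega)
  intro s h1 h2; simpa using this s h1 h2

lemma split_cycLen_i : cycLen τ i = a - r := by
  apply cycLen_eq_of_pow_eq (by omega)
  · have := split_pow_i hij hr1 hra hrj (a - r) ?_ le_rfl
    · rw [this]
      have : r + (a - r) = a := by omega
      rw [this, pow_cycLen]
    · omega
  · intro s hs0 hsL
    rw [split_pow_i hij hr1 hra hrj s hs0 (by omega)]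
    exact pow_ne_self σ (by omega) (by omega)

lemma split_cycLen_j : cycLen τ j = r := by
  apply cycLen_eq_of_pow_eq (by omega)
  · rw [split_pow_j hij hr1 hra hrj r hr1 le_rfl, hrj]
  · intro s hs0 hsL
    rw [split_pow_j hij hr1 hra hrj s hs0 (by omega), ← hrj]
    intro h; have := pow_inj σ (by omega : s < a) hra h; omega

lemma split_not_sameCycle : ¬ (τ : Equiv.Perm (Fin n)).SameCycle i j := by
  rw [sameCycle_iff_exists_lt]
  rintro ⟨k, hk, hkj⟩
  rw [split_cycLen_i hij hr1 hra hrj] at hk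
  rcases Nat.eq_zero_or_pos k with h0 | h0
  · subst h0; simp at hkj; exact hij hkj
  · rw [split_pow_i hij hr1 hra hrj k h0 (by omega), ← hrj] at hkj
    have := pow_inj σ (by omega : r + k < a) hra hkj
    omega

lemma split_orb_i_subset : orb τ i ⊆ orb σ i := by
  intro w hw
  rw [mem_orb, sameCycle_iff_exists_lt] at hw
  obtain ⟨k, hk, rfl⟩ := hw
  rw [split_cycLen_i hij hr1 hra hrj] at hk
  rcases Nat.eq_zero_or_pos k with h0 | h0
  · subst h0; simpa [mem_orb] using Equiv.Perm.SameCycle.refl σ i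
  · rw [split_pow_i hij hr1 hra hrj k h0 (by omega), mem_orb]
    exact sameCycle_pow σ i _

lemma split_orb_j_subset : orb τ j ⊆ orb σ i := by
  intro w hw
  rw [mem_orb, sameCycle_iff_exists_lt] at hw
  obtain ⟨k, hk, rfl⟩ := hw
  rw [split_cycLen_j hij hr1 hra hrj] at hk
  rcases Nat.eq_zero_or_pos k with h0 | h0
  · subst h0; rw [pow_zero]; rw [mem_orb, ← hrj]
    exact sameCycle_pow σ i _
  · rw [split_pow_j hij hr1 hra hrj k h0 (by omega), mem_orb]
    exact sameCycle_pow σ i _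

lemma split_orb_disjoint : Disjoint (orb τ i) (orb τ j) := by
  rw [Finset.disjoint_left]
  intro w hwi hwj
  rw [mem_orb] at hwi hwj
  exact split_not_sameCycle hij hr1 hra hrj (hwi.trans hwj.symm)

lemma split_orb_union : orb τ i ∪ orb τ j = orb σ i := by
  apply Finset.eq_of_subset_of_card_le
  · exact Finset.union_subset (split_orb_i_subset hij hr1 hra hrj)
      (split_orb_j_subset hij hr1 hra hrj)
  · rw [Finset.card_union_of_disjoint (split_orb_disjoint hij hr1 hra hrj),
      card_orb, card_orb, card_orb, split_cycLen_i hij hr1 hra hrj,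
      split_cycLen_j hij hr1 hra hrj]
    omega

end Split

section Merge
variable (hns : ¬ σ.SameCycle i j)

local notation "a" => cycLen σ i
local notation "b" => cycLen σ j
local notation "τ" => σ * Equiv.swap i j

include hns

lemma merge_ne : i ≠ j := fun h => hns (h ▸ Equiv.Perm.SameCycle.refl σ i)

lemma merge_pow_1 : ∀ s, 1 ≤ s → s ≤ b → (τ ^ s) i = (σ ^ s) j := by
  have := chain (σ := σ) (i := i) (j := j) (x := i) (y := j) (c := 0) (L := b)
    (by rw [tau_apply, Equiv.swap_apply_left, pow_one])
    (by intro m hm1 hm2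
        constructor
        · intro h; exact hns (Equiv.Perm.SameCycle.symm (h ▸ sameCycle_pow σ j m))
        · exact pow_ne_self σ (by omega) (by omega))
  intro s h1 h2; simpa using this s h1 h2

lemma merge_pow_b : (τ ^ b) i = j := by
  rw [merge_pow_1 hns b (cycLen_pos σ j) le_rfl, pow_cycLen]

lemma merge_pow_2 : ∀ s, 1 ≤ s → s ≤ a → (τ ^ (b + s)) i = (σ ^ s) i := by
  have hc := chain (σ := σ) (i := i) (j := j) (x := j) (y := i) (c := 0) (L := a)
    (by rw [tau_apply, Equiv.swap_apply_right, pow_one])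
    (by intro m hm1 hm2
        constructor
        · exact pow_ne_self σ (by omega) (by omega)
        · intro h; exact hns ⟨(m : ℤ), by rw [zpow_natCast, h]⟩)
  intro s h1 h2
  rw [show b + s = s + b by omega, pow_add, Equiv.Perm.mul_apply, merge_pow_b hns]
  simpa using hc s h1 h2

lemma merge_cycLen_i : cycLen τ i = a + b := by
  apply cycLen_eq_of_pow_eq (by have := cycLen_pos σ i; omega)
  · have : a + b = b + a := by omega
    rw [this, merge_pow_2 hns a (cycLen_pos σ i) le_rfl, pow_cycLen]
  · intro s hs0 hsL
    rcases le_or_gt s b with h | h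
    · rw [merge_pow_1 hns s hs0 h]
      intro hcontra; exact hns (Equiv.Perm.SameCycle.symm (hcontra ▸ sameCycle_pow σ j s))
    · have : s = b + (s - b) := by omega
      rw [this, merge_pow_2 hns (s - b) (by omega) (by omega)]
      exact pow_ne_self σ (by omega) (by omega)

lemma merge_orb_subset : orb τ i ⊆ orb σ i ∪ orb σ j := by
  intro w hw
  rw [mem_orb, sameCycle_iff_exists_lt] at hw
  obtain ⟨k, hk, rfl⟩ := hw
  rw [merge_cycLen_i hns] at hk
  rcases Nat.eq_zero_or_pos k with h0 | h0
  · subst h0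
    have h00 : ((σ * Equiv.swap i j) ^ 0) i = i := by simp
    rw [h00]
    exact Finset.mem_union_left _ (mem_orb.2 (Equiv.Perm.SameCycle.refl σ i))
  · rcases le_or_gt k b with h | h
    · rw [merge_pow_1 hns k h0 h, Finset.mem_union, mem_orb, mem_orb]
      exact Or.inr (sameCycle_pow σ j _)
    · have hk2 : k = b + (k - b) := by omega
      rw [hk2, merge_pow_2 hns (k - b) (by omega) (by omega), Finset.mem_union, mem_orb]
      exact Or.inl (sameCycle_pow σ i _)

lemma merge_orb_sigma_disjoint : Disjoint (orb σ i) (orb σ j) := by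
  rw [Finset.disjoint_left]
  intro w hwi hwj
  rw [mem_orb] at hwi hwj
  exact hns (hwi.trans hwj.symm)

lemma merge_orb_eq : orb τ i = orb σ i ∪ orb σ j := by
  refine (Finset.eq_of_subset_of_card_le (merge_orb_subset hns) ?_).symm.symm
  rw [Finset.card_union_of_disjoint (merge_orb_sigma_disjoint hns),
    card_orb, card_orb, card_orb, merge_cycLen_i hns]

end Merge

/-! ### Stage 3: the multiset of cycle lengths -/

lemma parts_cast {m k : ℕ} (h : m = k) (p : Nat.Partition m) :
    (cast (congrArg Nat.Partition h) p).parts = p.parts := by subst h; rfl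

lemma cyc_parts (σ : Equiv.Perm (Fin n)) :
    (cyc n σ).parts = σ.cycleType + Multiset.replicate (n - σ.support.card) 1 := by
  have h := parts_cast (Fintype.card_fin n) σ.partition
  rw [cyc, h, Equiv.Perm.parts_partition, Fintype.card_fin]

/-- The multiset of cycle lengths, counted per point. -/
def Mof (σ : Equiv.Perm (Fin n)) : Multiset ℕ := Finset.univ.val.map (cycLen σ)

lemma count_Mof (σ : Equiv.Perm (Fin n)) (k : ℕ) :
    Multiset.count k (Mof σ) = (Finset.univ.filter (fun v => cycLen σ v = k)).card := by
  rw [Mof, Multiset.count_map, Finset.card, Finset.filter_val]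
  congr 1
  exact Multiset.filter_congr (fun x _ => eq_comm)

lemma count_bind_rep (M : Multiset ℕ) (k : ℕ) :
    Multiset.count k (M.bind (fun a => Multiset.replicate a a)) = k * Multiset.count k M := by
  induction M using Multiset.induction with
  | empty => simp
  | cons a M ih =>
    rw [Multiset.cons_bind, Multiset.count_add, ih, Multiset.count_cons, Multiset.count_replicate]
    by_cases h : k = a
    · subst h; rw [if_pos rfl, if_pos rfl]; ring
    · simp only [if_neg h, if_neg (fun hh : a = k => h hh.symm)]; ring

lemma bind_rep_inj {M N : Multiset ℕ} (hM : ∀ x ∈ M, 0 < x) (hN : ∀ x ∈ N, 0 < x)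
    (h : M.bind (fun a => Multiset.replicate a a) = N.bind (fun a => Multiset.replicate a a)) :
    M = N := by
  ext k
  rcases Nat.eq_zero_or_pos k with h0 | h0
  · subst h0
    rw [Multiset.count_eq_zero.2 (fun hm => (hM 0 hm).ne rfl),
      Multiset.count_eq_zero.2 (fun hm => (hN 0 hm).ne rfl)]
  · have := congrArg (Multiset.count k) h
    rw [count_bind_rep, count_bind_rep] at this
    exact Nat.eq_of_mul_eq_mul_left h0 this

lemma cycLen_eq_one_iff {σ : Equiv.Perm (Fin n)} {v : Fin n} :
    cycLen σ v = 1 ↔ σ v = v := by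
  rw [cycLen, Function.minimalPeriod_eq_one_iff_isFixedPt]
  exact Iff.rfl

lemma support_cycleOf_eq_orb {σ : Equiv.Perm (Fin n)} {v : Fin n} (hv : v ∈ σ.support) :
    (σ.cycleOf v).support = orb σ v := by
  ext y
  rw [Equiv.Perm.mem_support_cycleOf_iff, mem_orb]
  exact ⟨fun h => h.1, fun h => ⟨h, hv⟩⟩

/-- Key structural lemma: the pointwise multiset of cycle lengths is obtained from the
partition by replacing each part `a` with `a` copies of `a`. -/
lemma Mof_eq_bind (σ : Equiv.Perm (Fin n)) :
    Mof σ = (cyc n σ).parts.bind (fun a => Multiset.replicate a a) := by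
  ext k
  rw [count_Mof, count_bind_rep, cyc_parts, Multiset.count_add]
  rcases Nat.eq_zero_or_pos k with h0 | h0
  · subst h0
    rw [Finset.card_eq_zero.2, mul_comm]
    · simp
    · rw [Finset.filter_eq_empty_iff]
      intro v _
      exact (cycLen_pos σ v).ne'
  rcases eq_or_lt_of_le (show 1 ≤ k from h0) with h1 | h1
  · -- k = 1 : fixed points
    rw [← h1]
    have hct : Multiset.count 1 σ.cycleType = 0 := by
      rw [Multiset.count_eq_zero]
      intro hmem
      have := Equiv.Perm.two_le_of_mem_cycleType hmem
      omega
    rw [hct]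
    have hrep1 : Multiset.count 1 (Multiset.replicate (n - σ.support.card) 1)
        = n - σ.support.card := by rw [Multiset.count_replicate, if_pos rfl]
    rw [hrep1]
    have hfix : Finset.univ.filter (fun v => cycLen σ v = 1) = Finset.univ \ σ.support := by
      ext v
      simp only [Finset.mem_filter, Finset.mem_sdiff, Finset.mem_univ, true_and,
        Equiv.Perm.mem_support, not_not]
      exact cycLen_eq_one_iff
    rw [hfix, Finset.card_sdiff_of_subset (Finset.subset_univ _), Finset.card_univ, Fintype.card_fin]
    omega
  · -- k ≥ 2
    have hrep : Multiset.count k (Multiset.replicate (n - σ.support.card) 1) = 0 := by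
      rw [Multiset.count_replicate, if_neg (by omega)]
    rw [hrep, add_zero]
    set F := σ.cycleFactorsFinset.filter (fun c => c.support.card = k) with hF
    have hunion : Finset.univ.filter (fun v => cycLen σ v = k)
        = F.biUnion (fun c => c.support) := by
      ext v
      simp only [Finset.mem_filter, Finset.mem_univ, true_and, Finset.mem_biUnion, hF]
      constructor
      · intro hv
        have hvs : v ∈ σ.support := by
          rw [Equiv.Perm.mem_support]
          intro hfix
          rw [← cycLen_eq_one_iff] at hfix
          omega
        refine ⟨σ.cycleOf v, ⟨?_, ?_⟩, ?_⟩
        · exact (Equiv.Perm.cycleOf_mem_cycleFactorsFinset_iff).2 hvs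
        · rw [support_cycleOf_eq_orb hvs, card_orb, hv]
        · rw [support_cycleOf_eq_orb hvs, mem_orb]
      · rintro ⟨c, hc, hvc⟩
        have hcyc : c = σ.cycleOf v := Equiv.Perm.cycle_is_cycleOf hvc hc.1
        have hvs : v ∈ σ.support := by
          have := Equiv.Perm.mem_support_cycleOf_iff.1 (by rw [← hcyc]; exact hvc)
          exact this.2
        rw [← card_orb σ v, ← support_cycleOf_eq_orb hvs, ← hcyc]
        exact hc.2
    rw [hunion, Finset.card_biUnion]
    · have hconst : ∀ c ∈ F, c.support.card = k := fun c hc => (Finset.mem_filter.1 hc).2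
      rw [Finset.sum_congr rfl hconst, Finset.sum_const, smul_eq_mul, mul_comm]
      congr 1
      rw [Equiv.Perm.cycleType_def, Multiset.count_map, hF, Finset.card, Finset.filter_val]
      congr 1
      exact (Multiset.filter_congr (fun x _ => eq_comm)).symm
    · intro c hc d hd hcd
      have h1 := (σ.cycleFactorsFinset_pairwise_disjoint)
        (Finset.mem_coe.2 (Finset.mem_filter.1 hc).1) (Finset.mem_coe.2 (Finset.mem_filter.1 hd).1) hcd
      exact h1.disjoint_support

/-! ### Stage 4: effect of a swap on the partition -/

lemma map_cycLen_const {τ : Equiv.Perm (Fin n)} {U : Finset (Fin n)} {c : ℕ}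
    (h : ∀ v ∈ U, cycLen τ v = c) :
    U.val.map (cycLen τ) = Multiset.replicate U.card c := by
  rw [Multiset.eq_replicate]
  constructor
  · rw [Multiset.card_map]; rfl
  · intro b hb
    obtain ⟨v, hv, rfl⟩ := Multiset.mem_map.1 hb
    exact h v hv

lemma univ_val_decomp (O : Finset (Fin n)) :
    (Finset.univ : Finset (Fin n)).val = O.val + (Finset.univ \ O).val := by
  rw [Finset.sdiff_val]
  rw [add_tsub_cancel_of_le (Finset.val_le_iff.2 (Finset.subset_univ O))]

lemma union_val_of_disjoint {s t : Finset (Fin n)} (h : Disjoint s t) :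
    (s ∪ t).val = s.val + t.val := by
  rw [← Finset.disjUnion_eq_union s t h]; rfl

lemma off_orbit_pow {v : Fin n} (hi : ¬ σ.SameCycle i v) (hj : ¬ σ.SameCycle j v) :
    ∀ k, ((σ * Equiv.swap i j) ^ k) v = (σ ^ k) v := by
  intro k
  induction k with
  | zero => rfl
  | succ k ih =>
    rw [pow_succ', Equiv.Perm.mul_apply, ih, pow_succ' σ k, Equiv.Perm.mul_apply]
    apply tau_apply_of_ne
    · intro h; exact hi (Equiv.Perm.SameCycle.symm (h ▸ sameCycle_pow σ v k))
    · intro h; exact hj (Equiv.Perm.SameCycle.symm (h ▸ sameCycle_pow σ v k))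

lemma cycLen_off_orbit {v : Fin n} (hi : ¬ σ.SameCycle i v) (hj : ¬ σ.SameCycle j v) :
    cycLen (σ * Equiv.swap i j) v = cycLen σ v :=
  cycLen_congr (off_orbit_pow hi hj)

lemma cycLen_count_ge {σ : Equiv.Perm (Fin n)} {U : Finset (Fin n)} {c : ℕ}
    (hU : ∀ v ∈ U, cycLen σ v = c) :
    U.card ≤ Multiset.count c (Mof σ) := by
  rw [count_Mof]
  apply Finset.card_le_card
  intro v hv
  exact Finset.mem_filter.2 ⟨Finset.mem_univ v, hU v hv⟩

lemma cycLen_mem_parts (σ : Equiv.Perm (Fin n)) (v : Fin n) :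
    cycLen σ v ∈ (cyc n σ).parts := by
  rw [← Multiset.count_pos]
  have h1 : 1 ≤ Multiset.count (cycLen σ v) (Mof σ) := by
    rw [count_Mof]
    refine Finset.card_pos.2 ⟨v, Finset.mem_filter.2 ⟨Finset.mem_univ v, rfl⟩⟩
  rw [Mof_eq_bind, count_bind_rep] at h1
  by_contra h
  push_neg at h
  interval_cases hc : Multiset.count (cycLen σ v) (cyc n σ).parts
  omega

/-- Split claim: multiplying by a swap of two points in the same cycle splits the part. -/
lemma split_parts {r : ℕ} (hij : i ≠ j) (hr1 : 1 ≤ r) (hra : r < cycLen σ i)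
    (hrj : (σ ^ r) i = j) :
    (cyc n (σ * Equiv.swap i j)).parts
      = r ::ₘ (cycLen σ i - r) ::ₘ ((cyc n σ).parts.erase (cycLen σ i)) := by
  set τ := σ * Equiv.swap i j with hτ
  set a := cycLen σ i with ha
  set O := orb σ i with hO
  set C := (Finset.univ \ O).val.map (cycLen σ) with hC
  -- σ side
  have hmapO : O.val.map (cycLen σ) = Multiset.replicate a a := by
    rw [map_cycLen_const (fun v hv => cycLen_eq_of_sameCycle (mem_orb.1 hv)), card_orb]
  have hMσ : Mof σ = Multiset.replicate a a + C := by
    rw [Mof, univ_val_decomp O, Multiset.map_add, hmapO, hC]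
  -- τ side
  have hOτ : O = orb τ i ∪ orb τ j := (split_orb_union hij hr1 hra hrj).symm
  have hmapOτ : O.val.map (cycLen τ)
      = Multiset.replicate (a - r) (a - r) + Multiset.replicate r r := by
    rw [hOτ, union_val_of_disjoint (split_orb_disjoint hij hr1 hra hrj), Multiset.map_add]
    congr 1
    · rw [map_cycLen_const (fun v hv => by
        rw [cycLen_eq_of_sameCycle (mem_orb.1 hv), split_cycLen_i hij hr1 hra hrj]),
        card_orb, split_cycLen_i hij hr1 hra hrj]
    · rw [map_cycLen_const (fun v hv => by
        rw [cycLen_eq_of_sameCycle (mem_orb.1 hv), split_cycLen_j hij hr1 hra hrj]),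
        card_orb, split_cycLen_j hij hr1 hra hrj]
  have hCτ : (Finset.univ \ O).val.map (cycLen τ) = C := by
    rw [hC]
    apply Multiset.map_congr rfl
    intro v hv
    have hv' : v ∈ Finset.univ \ O := hv
    rw [Finset.mem_sdiff] at hv'
    have hvi : ¬ σ.SameCycle i v := fun h => hv'.2 (mem_orb.2 h)
    have hvj : ¬ σ.SameCycle j v := by
      intro h
      exact hv'.2 (mem_orb.2 ((hrj ▸ sameCycle_pow σ i r).trans h))
    exact cycLen_off_orbit hvi hvj
  have hMτ : Mof τ = Multiset.replicate (a - r) (a - r) + Multiset.replicate r r + C := by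
    rw [Mof, univ_val_decomp O, Multiset.map_add, hmapOτ, hCτ]
  -- relate C to erased parts
  have hamem : a ∈ (cyc n σ).parts := ha ▸ cycLen_mem_parts σ i
  have hcons : (cyc n σ).parts = a ::ₘ (cyc n σ).parts.erase a := (Multiset.cons_erase hamem).symm
  have hCbind : ((cyc n σ).parts.erase a).bind (fun x => Multiset.replicate x x) = C := by
    have h1 := Mof_eq_bind σ
    rw [hMσ, hcons, Multiset.cons_bind] at h1
    exact (add_left_cancel h1.symm)
  -- conclude
  apply bind_rep_inj
  · intro x hx; exact (cyc n (σ * Equiv.swap i j)).parts_pos hx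
  · intro x hx
    rcases Multiset.mem_cons.1 hx with h | h
    · omega
    rcases Multiset.mem_cons.1 h with h' | h'
    · omega
    · exact (cyc n σ).parts_pos (Multiset.mem_of_mem_erase h')
  · rw [← Mof_eq_bind, hMτ, Multiset.cons_bind, Multiset.cons_bind, hCbind]
    rw [add_comm (Multiset.replicate (a-r) (a-r)) (Multiset.replicate r r)]
    abel

/-- Merge claim: multiplying by a swap of two points in different cycles merges the parts. -/
lemma merge_parts (hns : ¬ σ.SameCycle i j) :
    (cyc n (σ * Equiv.swap i j)).parts
      = (cycLen σ i + cycLen σ j) ::ₘ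
          (((cyc n σ).parts.erase (cycLen σ i)).erase (cycLen σ j)) := by
  set τ := σ * Equiv.swap i j with hτ
  set a := cycLen σ i with ha
  set b := cycLen σ j with hb
  set O := orb σ i ∪ orb σ j with hO
  set C := (Finset.univ \ O).val.map (cycLen σ) with hC
  have hdisj := merge_orb_sigma_disjoint hns
  have hmapO : O.val.map (cycLen σ) = Multiset.replicate a a + Multiset.replicate b b := by
    rw [hO, union_val_of_disjoint hdisj, Multiset.map_add]
    congr 1
    · rw [map_cycLen_const (fun v hv => cycLen_eq_of_sameCycle (mem_orb.1 hv)), card_orb]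
    · rw [map_cycLen_const (fun v hv => cycLen_eq_of_sameCycle (mem_orb.1 hv)), card_orb]
  have hMσ : Mof σ = Multiset.replicate a a + Multiset.replicate b b + C := by
    rw [Mof, univ_val_decomp O, Multiset.map_add, hmapO, hC]
  have hOτ : O = orb τ i := (merge_orb_eq hns).symm
  have hmapOτ : O.val.map (cycLen τ) = Multiset.replicate (a + b) (a + b) := by
    rw [map_cycLen_const (fun v hv => by
      rw [hOτ] at hv
      rw [cycLen_eq_of_sameCycle (mem_orb.1 hv), merge_cycLen_i hns]), hOτ, card_orb,
      merge_cycLen_i hns]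
  have hCτ : (Finset.univ \ O).val.map (cycLen τ) = C := by
    rw [hC]
    apply Multiset.map_congr rfl
    intro v hv
    have hv' : v ∈ Finset.univ \ O := hv
    rw [Finset.mem_sdiff, hO, Finset.mem_union] at hv'
    have hvi : ¬ σ.SameCycle i v := fun h => hv'.2 (Or.inl (mem_orb.2 h))
    have hvj : ¬ σ.SameCycle j v := fun h => hv'.2 (Or.inr (mem_orb.2 h))
    exact cycLen_off_orbit hvi hvj
  have hMτ : Mof τ = Multiset.replicate (a + b) (a + b) + C := by
    rw [Mof, univ_val_decomp O, Multiset.map_add, hmapOτ, hCτ]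
  -- memberships
  have hamem : a ∈ (cyc n σ).parts := ha ▸ cycLen_mem_parts σ i
  have hbmem : b ∈ (cyc n σ).parts.erase a := by
    have hb1 : 0 < b := cycLen_pos σ j
    by_cases hab : b = a
    · -- need count a parts ≥ 2
      have h2a : 2 * a ≤ Multiset.count a (Mof σ) := by
        have : Multiset.count a (Mof σ)
            = Multiset.count a (Multiset.replicate a a) +
              (Multiset.count a (Multiset.replicate b b) + Multiset.count a C) := by
          rw [hMσ]; simp [Multiset.count_add, add_assoc]
        rw [this, Multiset.count_replicate, if_pos rfl, hab, Multiset.count_replicate, if_pos rfl]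
        omega
      rw [Mof_eq_bind, count_bind_rep] at h2a
      have ha0 : 0 < a := cycLen_pos σ i
      have hcount : 2 ≤ Multiset.count a (cyc n σ).parts := by
        by_contra hcon
        push_neg at hcon
        interval_cases hq : Multiset.count a (cyc n σ).parts <;> omega
      rw [hab, ← Multiset.count_pos, Multiset.count_erase_self]
      omega
    · have hbm : b ∈ (cyc n σ).parts := hb ▸ cycLen_mem_parts σ j
      rw [← Multiset.count_pos, Multiset.count_erase_of_ne hab, Multiset.count_pos]
      exact hbm
  have hcons1 : (cyc n σ).parts = a ::ₘ (cyc n σ).parts.erase a := (Multiset.cons_erase hamem).symm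
  have hcons2 : (cyc n σ).parts.erase a = b ::ₘ ((cyc n σ).parts.erase a).erase b :=
    (Multiset.cons_erase hbmem).symm
  have hCbind : (((cyc n σ).parts.erase a).erase b).bind (fun x => Multiset.replicate x x) = C := by
    have h1 := Mof_eq_bind σ
    rw [hMσ, hcons1, Multiset.cons_bind, hcons2, Multiset.cons_bind, ← add_assoc] at h1
    exact (add_left_cancel h1.symm)
  apply bind_rep_inj
  · intro x hx; exact (cyc n (σ * Equiv.swap i j)).parts_pos hx
  · intro x hx
    rcases Multiset.mem_cons.1 hx with h | h
    · have := cycLen_pos σ i; omega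
    · exact (cyc n σ).parts_pos (Multiset.mem_of_mem_erase (Multiset.mem_of_mem_erase h))
  · rw [← Mof_eq_bind, hMτ, Multiset.cons_bind, hCbind]

/-! ### Stage 5: one-step lumping -/

lemma sum_univ_cycLen (σ : Equiv.Perm (Fin n)) (g : ℕ → ℝ) :
    ∑ v : Fin n, g (cycLen σ v)
      = ((cyc n σ).parts.map (fun x : ℕ => (x : ℝ) * g x)).sum := by
  show (Multiset.map (fun v => g (cycLen σ v)) Finset.univ.val).sum = _
  have h1 : Multiset.map (fun v => g (cycLen σ v)) Finset.univ.val
      = (Mof σ).map g := by rw [Mof, Multiset.map_map]; rfl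
  rw [h1, Mof_eq_bind, Multiset.map_bind, Multiset.sum_bind]
  congr 1
  apply Multiset.map_congr rfl
  intro x _
  rw [Multiset.map_replicate, Multiset.sum_replicate, nsmul_eq_mul]

lemma sum_orb_const (σ : Equiv.Perm (Fin n)) (i : Fin n) (g : ℕ → ℝ) :
    ∑ v ∈ orb σ i, g (cycLen σ v) = (cycLen σ i : ℝ) * g (cycLen σ i) := by
  rw [Finset.sum_congr rfl (fun v hv => by rw [cycLen_eq_of_sameCycle (mem_orb.1 hv)]),
    Finset.sum_const, card_orb, nsmul_eq_mul]

lemma sum_not_sameCycle (σ : Equiv.Perm (Fin n)) (i : Fin n) (g : ℕ → ℝ) :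
    ∑ j ∈ Finset.univ.filter (fun j => ¬ σ.SameCycle i j), g (cycLen σ j)
      = (((cyc n σ).parts.erase (cycLen σ i)).map (fun x : ℕ => (x : ℝ) * g x)).sum := by
  have hset : Finset.univ.filter (fun j => ¬ σ.SameCycle i j) = Finset.univ \ orb σ i := by
    ext j
    simp [mem_orb, Finset.mem_sdiff]
  rw [hset, Finset.sum_sdiff_eq_sub (Finset.subset_univ _), sum_univ_cycLen, sum_orb_const]
  have hmem := cycLen_mem_parts σ i
  have hcons : (cyc n σ).parts = cycLen σ i ::ₘ (cyc n σ).parts.erase (cycLen σ i) :=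
    (Multiset.cons_erase hmem).symm
  calc ((cyc n σ).parts.map fun x : ℕ => (x:ℝ) * g x).sum - (cycLen σ i : ℝ) * g (cycLen σ i)
      = ((cycLen σ i ::ₘ (cyc n σ).parts.erase (cycLen σ i)).map fun x : ℕ => (x:ℝ) * g x).sum
        - (cycLen σ i : ℝ) * g (cycLen σ i) := by rw [← hcons]
    _ = _ := by rw [Multiset.map_cons, Multiset.sum_cons]; ring

/-- The inner sum over `j` for a fixed `i`. -/
lemma inner_sum_j (hn : 1 ≤ n) (σ : Equiv.Perm (Fin n)) (q : Nat.Partition n) (i : Fin n) :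
    ∑ j : Fin n, (if cyc n (σ * Equiv.swap i j) = q then (1:ℝ) else 0)
      = (if cyc n σ = q then (1:ℝ) else 0)
        + (∑ r ∈ Finset.Ico 1 (cycLen σ i),
            if q.parts = r ::ₘ (cycLen σ i - r) ::ₘ (cyc n σ).parts.erase (cycLen σ i)
              then (1:ℝ) else 0)
        + (((cyc n σ).parts.erase (cycLen σ i)).map (fun b : ℕ => (b : ℝ) *
            (if q.parts = (cycLen σ i + b) ::ₘ
                (((cyc n σ).parts.erase (cycLen σ i)).erase b) then (1:ℝ) else 0))).sum := by
  set F : Fin n → ℝ := fun j => if cyc n (σ * Equiv.swap i j) = q then (1:ℝ) else 0 with hF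
  have hdiag : F i = if cyc n σ = q then (1:ℝ) else 0 := by
    have hss : σ * Equiv.swap i i = σ := by
      rw [Equiv.swap_self]; ext v; rfl
    rw [hF]; simp only [hss]
  have hsplit : ∑ j : Fin n, F j = F i + ∑ j ∈ Finset.univ.erase i, F j :=
    (Finset.add_sum_erase _ F (Finset.mem_univ i)).symm
  have hsame : ∑ j ∈ (Finset.univ.erase i).filter (fun j => σ.SameCycle i j), F j
      = ∑ r ∈ Finset.Ico 1 (cycLen σ i),
          if q.parts = r ::ₘ (cycLen σ i - r) ::ₘ (cyc n σ).parts.erase (cycLen σ i)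
            then (1:ℝ) else 0 := by
    refine (Finset.sum_bij (fun r _ => (σ ^ r) i) ?_ ?_ ?_ ?_).symm
    · intro r hr
      rw [Finset.mem_Ico] at hr
      refine Finset.mem_filter.2 ⟨Finset.mem_erase.2 ⟨?_, Finset.mem_univ _⟩, sameCycle_pow σ i r⟩
      exact pow_ne_self σ (by omega) hr.2
    · intro r hr s hs h
      rw [Finset.mem_Ico] at hr hs
      exact pow_inj σ hr.2 hs.2 h
    · intro j hj
      rw [Finset.mem_filter, Finset.mem_erase] at hj
      obtain ⟨k, hk, hkj⟩ := sameCycle_iff_exists_lt.1 hj.2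
      refine ⟨k, Finset.mem_Ico.2 ⟨?_, hk⟩, hkj⟩
      rcases Nat.eq_zero_or_pos k with h0 | h0
      · exfalso; apply hj.1.1; rw [← hkj, h0, pow_zero]; rfl
      · omega
    · intro r hr
      rw [Finset.mem_Ico] at hr
      have hij : i ≠ (σ ^ r) i := (pow_ne_self σ (by omega) hr.2).symm
      rw [hF]
      simp only
      congr 1
      rw [show (cyc n (σ * Equiv.swap i ((σ^r) i)) = q)
          = (q.parts = r ::ₘ (cycLen σ i - r) ::ₘ (cyc n σ).parts.erase (cycLen σ i)) from ?_]
      rw [eq_iff_iff]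
      constructor
      · intro h; rw [← h, split_parts hij hr.1 hr.2 rfl]
      · intro h
        apply Nat.Partition.ext
        rw [split_parts hij hr.1 hr.2 rfl, h]
  have hnots : ∑ j ∈ (Finset.univ.erase i).filter (fun j => ¬ σ.SameCycle i j), F j
      = (((cyc n σ).parts.erase (cycLen σ i)).map (fun b : ℕ => (b : ℝ) *
          (if q.parts = (cycLen σ i + b) ::ₘ
              (((cyc n σ).parts.erase (cycLen σ i)).erase b) then (1:ℝ) else 0))).sum := by
    have hBeq : (Finset.univ.erase i).filter (fun j => ¬ σ.SameCycle i j)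
        = Finset.univ.filter (fun j => ¬ σ.SameCycle i j) := by
      ext j
      simp only [Finset.mem_filter, Finset.mem_erase, Finset.mem_univ, true_and, and_true]
      constructor
      · exact fun h => h.2
      · intro h
        refine ⟨fun hji => ?_, h⟩
        subst hji; exact h (Equiv.Perm.SameCycle.refl σ j)
    rw [hBeq]
    rw [Finset.sum_congr rfl (fun j hj => ?_), sum_not_sameCycle σ i
      (fun b : ℕ => if q.parts = (cycLen σ i + b) ::ₘ
          (((cyc n σ).parts.erase (cycLen σ i)).erase b) then (1:ℝ) else 0)]
    have hns : ¬ σ.SameCycle i j := (Finset.mem_filter.1 hj).2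
    rw [hF]
    simp only
    congr 1
    rw [eq_iff_iff]
    constructor
    · intro h; rw [← h, merge_parts hns]
    · intro h
      apply Nat.Partition.ext
      rw [merge_parts hns, h]
  rw [hsplit, hdiag, ← Finset.sum_filter_add_sum_filter_not (Finset.univ.erase i)
    (fun j => σ.SameCycle i j) F, hsame, hnots]
  ring

lemma sum_fiber_rtMatrix (hn : 1 ≤ n) (σ : Equiv.Perm (Fin n)) (q : Nat.Partition n) :
    ∑ β ∈ Finset.univ.filter (fun β => cyc n β = q), rtMatrix n σ β
      = smKernel n (cyc n σ) q := by
  have hn0 : (n : ℝ) ≠ 0 := Nat.cast_ne_zero.2 (by omega)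
  have hn2 : ((n : ℝ) ^ 2) ≠ 0 := pow_ne_zero 2 hn0
  set p := cyc n σ with hp
  -- step 1 : rewrite the LHS as a sum of indicators over pairs
  have step1 : ∑ β ∈ Finset.univ.filter (fun β => cyc n β = q), rtMatrix n σ β
      = (∑ ij : Fin n × Fin n,
          if cyc n (σ * Equiv.swap ij.1 ij.2) = q then (1:ℝ) else 0) / (n:ℝ)^2 := by
    unfold rtMatrix
    rw [← Finset.sum_div]
    congr 1
    have hb : ∀ β : Equiv.Perm (Fin n),
        ((Finset.univ.filter (fun ij : Fin n × Fin n => σ * Equiv.swap ij.1 ij.2 = β)).card : ℝ)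
          = ∑ ij : Fin n × Fin n, if σ * Equiv.swap ij.1 ij.2 = β then (1:ℝ) else 0 := by
      intro β; rw [Finset.sum_boole]
    rw [Finset.sum_congr rfl (fun β _ => hb β), Finset.sum_comm]
    apply Finset.sum_congr rfl
    intro ij _
    rw [Finset.sum_ite_eq (Finset.univ.filter (fun β => cyc n β = q))
      (σ * Equiv.swap ij.1 ij.2) (fun _ => (1:ℝ))]
    simp [Finset.mem_filter]
  rw [step1, Fintype.sum_prod_type]
  -- step 2 : compute the inner sums
  set gS : ℕ → ℝ := fun a =>
    ∑ r ∈ Finset.Ico 1 a, if q.parts = r ::ₘ (a - r) ::ₘ p.parts.erase a then (1:ℝ) else 0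
    with hgS
  set gM : ℕ → ℝ := fun a =>
    ((p.parts.erase a).map (fun b : ℕ => (b : ℝ) *
      (if q.parts = (a + b) ::ₘ ((p.parts.erase a).erase b) then (1:ℝ) else 0))).sum with hgM
  have step2 : ∀ i : Fin n,
      ∑ j : Fin n, (if cyc n (σ * Equiv.swap i j) = q then (1:ℝ) else 0)
        = (if cyc n σ = q then (1:ℝ) else 0) + gS (cycLen σ i) + gM (cycLen σ i) := by
    intro i
    rw [inner_sum_j hn σ q i]
  rw [Finset.sum_congr rfl (fun i _ => step2 i)]
  rw [Finset.sum_add_distrib, Finset.sum_add_distrib, Finset.sum_const, Finset.card_univ,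
    Fintype.card_fin, sum_univ_cycLen σ gS, sum_univ_cycLen σ gM]
  -- step 3 : match with the kernel
  rw [smKernel]
  rw [add_div, add_div]
  congr 1
  · congr 1
    · -- diagonal piece
      rw [nsmul_eq_mul]
      by_cases h : cyc n σ = q
      · rw [if_pos h, if_pos (by rw [hp, h]), mul_one, sq]
        field_simp
      · rw [if_neg h, if_neg (fun hqp => h (by rw [hp] at hqp; exact hqp.symm)), mul_zero,
          zero_div]
    · -- split piece
      rw [div_eq_mul_inv, ← Multiset.sum_map_mul_right]
      congr 1
      apply Multiset.map_congr rfl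
      intro a _
      rw [hgS]
      simp only
      rw [Finset.mul_sum, Finset.sum_mul]
      apply Finset.sum_congr rfl
      intro r _
      split_ifs with hc
      · rw [mul_one, div_eq_mul_inv]
      · simp
  · -- merge piece
    rw [div_eq_mul_inv, ← Multiset.sum_map_mul_right]
    congr 1
    apply Multiset.map_congr rfl
    intro a _
    rw [hgM]
    simp only
    rw [← Multiset.sum_map_mul_left, ← Multiset.sum_map_mul_right]
    congr 1
    apply Multiset.map_congr rfl
    intro b _
    split_ifs with hc
    · rw [mul_one, div_eq_mul_inv]
    · simp

/-! ### Stage 6: matrix powers, invariance, lumping of powers -/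

lemma rtMatrix_left_inv (σ β : Equiv.Perm (Fin n)) :
    rtMatrix n σ β = rtMatrix n 1 (σ⁻¹ * β) := by
  unfold rtMatrix
  congr 2
  congr 1
  apply Finset.filter_congr
  intro ij _
  rw [one_mul]
  constructor
  · intro h; rw [← h]; group
  · intro h; rw [h]; group

lemma rt_pow_left_inv (t : ℕ) (α β : Equiv.Perm (Fin n)) :
    (rtMatrix n ^ t) α β = (rtMatrix n ^ t) 1 (α⁻¹ * β) := by
  induction t generalizing α β with
  | zero =>
    rw [pow_zero, Matrix.one_apply, Matrix.one_apply]
    congr 1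
    rw [eq_iff_iff]
    constructor
    · intro h; rw [h]; group
    · intro h
      rw [show β = α * (α⁻¹ * β) from by group, ← h, mul_one]
  | succ t ih =>
    rw [pow_succ, Matrix.mul_apply, Matrix.mul_apply]
    have hR : ∑ γ, (rtMatrix n ^ t) 1 γ * rtMatrix n γ (α⁻¹ * β)
        = ∑ γ, (rtMatrix n ^ t) 1 γ * rtMatrix n 1 (γ⁻¹ * (α⁻¹ * β)) :=
      Finset.sum_congr rfl (fun γ _ => by rw [rtMatrix_left_inv γ (α⁻¹ * β)])
    rw [hR]
    refine Eq.trans ?_ (Equiv.sum_comp (Equiv.mulLeft α⁻¹)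
      (fun γ => (rtMatrix n ^ t) 1 γ * rtMatrix n 1 (γ⁻¹ * (α⁻¹ * β))))
    apply Finset.sum_congr rfl
    intro γ _
    simp only [Equiv.coe_mulLeft]
    rw [ih α γ, rtMatrix_left_inv γ β]
    congr 2
    group

lemma rtMatrix_conj (g σ β : Equiv.Perm (Fin n)) :
    rtMatrix n (g * σ * g⁻¹) (g * β * g⁻¹) = rtMatrix n σ β := by
  unfold rtMatrix
  congr 2
  apply Finset.card_bij' (fun ij _ => (g⁻¹ ij.1, g⁻¹ ij.2)) (fun ij _ => (g ij.1, g ij.2))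
  · intro ij hij
    rw [Finset.mem_filter] at hij ⊢
    refine ⟨Finset.mem_univ _, ?_⟩
    have hs : Equiv.swap ij.1 ij.2 = (g * σ * g⁻¹)⁻¹ * (g * β * g⁻¹) := by
      rw [← hij.2]; group
    show σ * Equiv.swap (g⁻¹ ij.1) (g⁻¹ ij.2) = β
    rw [Equiv.swap_apply_apply g⁻¹ ij.1 ij.2, hs]
    group
  · intro ij hij
    rw [Finset.mem_filter] at hij ⊢
    refine ⟨Finset.mem_univ _, ?_⟩
    show g * σ * g⁻¹ * Equiv.swap (g ij.1) (g ij.2) = g * β * g⁻¹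
    rw [Equiv.swap_apply_apply g ij.1 ij.2, ← hij.2]
    group
  · intro ij _; simp
  · intro ij _; simp

lemma rt_pow_conj (t : ℕ) (g β : Equiv.Perm (Fin n)) :
    (rtMatrix n ^ t) 1 (g * β * g⁻¹) = (rtMatrix n ^ t) 1 β := by
  induction t generalizing β with
  | zero =>
    rw [pow_zero, Matrix.one_apply, Matrix.one_apply]
    congr 1
    rw [eq_iff_iff, eq_comm, conj_eq_one_iff, eq_comm (a := (1 : Equiv.Perm (Fin n)))]
  | succ t ih =>
    rw [pow_succ, Matrix.mul_apply, Matrix.mul_apply]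
    refine Eq.trans (Equiv.sum_comp (MulAut.conj g).toEquiv
      (fun γ => (rtMatrix n ^ t) 1 γ * rtMatrix n γ (g * β * g⁻¹))).symm ?_
    apply Finset.sum_congr rfl
    intro γ _
    show (rtMatrix n ^ t) 1 (g * γ * g⁻¹) * rtMatrix n (g * γ * g⁻¹) (g * β * g⁻¹) = _
    rw [ih γ, rtMatrix_conj g γ β]

lemma rt_pow_class (t : ℕ) {β β' : Equiv.Perm (Fin n)} (h : cyc n β = cyc n β') :
    (rtMatrix n ^ t) 1 β = (rtMatrix n ^ t) 1 β' := by
  have e1 : (cyc n β).parts = β.partition.parts := parts_cast (Fintype.card_fin n) _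
  have e2 : (cyc n β').parts = β'.partition.parts := parts_cast (Fintype.card_fin n) _
  have hpp : β.partition.parts = β'.partition.parts := by rw [← e1, ← e2, h]
  have hconj : IsConj β β' := Equiv.Perm.partition_eq_of_isConj.2 (Nat.Partition.ext hpp)
  obtain ⟨c, hc⟩ := isConj_iff.1 hconj
  rw [← hc, rt_pow_conj]

lemma sum_fiber_rt_pow (hn : 1 ≤ n) (t : ℕ) (q : Nat.Partition n) :
    ∑ β ∈ Finset.univ.filter (fun β => cyc n β = q), (rtMatrix n ^ t) 1 β
      = (smMatrix n ^ t) (cyc n 1) q := by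
  induction t generalizing q with
  | zero =>
    rw [pow_zero, pow_zero, Matrix.one_apply]
    have h1 : ∀ β ∈ Finset.univ.filter (fun β : Equiv.Perm (Fin n) => cyc n β = q),
        (1 : Matrix (Equiv.Perm (Fin n)) (Equiv.Perm (Fin n)) ℝ) 1 β
          = if (1 : Equiv.Perm (Fin n)) = β then (1:ℝ) else 0 := by
      intro β _; rw [Matrix.one_apply]
    rw [Finset.sum_congr rfl h1,
      Finset.sum_ite_eq (Finset.univ.filter (fun β : Equiv.Perm (Fin n) => cyc n β = q)) 1
        (fun _ => (1:ℝ))]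
    simp [Finset.mem_filter]
  | succ t ih =>
    rw [pow_succ, pow_succ, Matrix.mul_apply]
    have hterm : ∀ β, (rtMatrix n ^ t * rtMatrix n) 1 β
        = ∑ γ, (rtMatrix n ^ t) 1 γ * rtMatrix n γ β := fun β => Matrix.mul_apply
    rw [Finset.sum_congr rfl (fun β _ => hterm β), Finset.sum_comm]
    have hinner : ∀ γ : Equiv.Perm (Fin n),
        ∑ β ∈ Finset.univ.filter (fun β => cyc n β = q), (rtMatrix n ^ t) 1 γ * rtMatrix n γ β
          = (rtMatrix n ^ t) 1 γ * smKernel n (cyc n γ) q := by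
      intro γ
      rw [← Finset.mul_sum, sum_fiber_rtMatrix hn γ q]
    rw [Finset.sum_congr rfl (fun γ _ => hinner γ)]
    rw [← Finset.sum_fiberwise Finset.univ (fun γ => cyc n γ)
      (fun γ => (rtMatrix n ^ t) 1 γ * smKernel n (cyc n γ) q)]
    apply Finset.sum_congr rfl
    intro p _
    have h2 : ∀ γ ∈ Finset.univ.filter (fun γ => cyc n γ = p),
        (rtMatrix n ^ t) 1 γ * smKernel n (cyc n γ) q
          = (rtMatrix n ^ t) 1 γ * smKernel n p q := by
      intro γ hγ
      rw [(Finset.mem_filter.1 hγ).2]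
    rw [Finset.sum_congr rfl h2, ← Finset.sum_mul, ih p]
    rfl

/-! ### Stage 7: total variation distances -/

lemma smPi_fiber (q : Nat.Partition n) :
    smPi n q = ∑ β ∈ Finset.univ.filter (fun β => cyc n β = q), rtPi n β := by
  simp only [smPi, rtPi]
  rw [Finset.sum_const, nsmul_eq_mul, div_eq_mul_inv]

lemma abs_sum_const {X : Type*} (s : Finset X) (f : X → ℝ)
    (h : ∀ x ∈ s, ∀ y ∈ s, f x = f y) :
    ∑ x ∈ s, |f x| = |∑ x ∈ s, f x| := by
  rcases s.eq_empty_or_nonempty with rfl | ⟨x0, hx0⟩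
  · simp
  · have h1 : ∀ x ∈ s, |f x| = |f x0| := fun x hx => by rw [h x hx x0 hx0]
    have h2 : ∀ x ∈ s, f x = f x0 := fun x hx => h x hx x0 hx0
    rw [Finset.sum_congr rfl h1, Finset.sum_congr rfl h2, Finset.sum_const, Finset.sum_const,
      nsmul_eq_mul, nsmul_eq_mul, abs_mul, Nat.abs_cast]

lemma tv_eq (hn : 1 ≤ n) (t : ℕ) :
    tvDist ((rtMatrix n ^ t) 1) (rtPi n) = tvDist ((smMatrix n ^ t) (cyc n 1)) (smPi n) := by
  unfold tvDist
  congr 1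
  rw [← Finset.sum_fiberwise Finset.univ (fun β => cyc n β)
    (fun β => |(rtMatrix n ^ t) 1 β - rtPi n β|)]
  apply Finset.sum_congr rfl
  intro q _
  rw [abs_sum_const _ _ (fun β hβ β' hβ' => by
    rw [rt_pow_class t (((Finset.mem_filter.1 hβ).2).trans ((Finset.mem_filter.1 hβ').2).symm)]
    rfl)]
  rw [Finset.sum_sub_distrib, sum_fiber_rt_pow hn t q, ← smPi_fiber q]

lemma tv_const (t : ℕ) (α : Equiv.Perm (Fin n)) :
    tvDist ((rtMatrix n ^ t) α) (rtPi n) = tvDist ((rtMatrix n ^ t) 1) (rtPi n) := by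
  unfold tvDist
  congr 1
  have h1 : ∀ β, |(rtMatrix n ^ t) α β - rtPi n β|
      = |(rtMatrix n ^ t) 1 (α⁻¹ * β) - rtPi n β| := by
    intro β; rw [rt_pow_left_inv t α β]
  rw [Finset.sum_congr rfl (fun β _ => h1 β)]
  have h2 : rtPi n = fun _ : Equiv.Perm (Fin n) => ((n.factorial : ℝ))⁻¹ := rfl
  refine Eq.trans (Equiv.sum_comp (Equiv.mulLeft α)
    (fun β => |(rtMatrix n ^ t) 1 (α⁻¹ * β) - rtPi n β|)).symm ?_
  apply Finset.sum_congr rfl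
  intro γ _
  simp only [Equiv.coe_mulLeft, h2]
  rw [inv_mul_cancel_left]

end SM

/-- The distance to stationarity of the random transposition walk is bounded by that of
the split-merge chain. -/
theorem rt_distance_le_sm_distance (n : ℕ) (hn : 1 ≤ n) (t : ℕ) :
    (⨆ α : Equiv.Perm (Fin n), tvDist ((rtMatrix n ^ t) α) (rtPi n)) ≤
      ⨆ σ : Nat.Partition n, tvDist ((smMatrix n ^ t) σ) (smPi n) := by
  have h1 : ∀ α : Equiv.Perm (Fin n), tvDist ((rtMatrix n ^ t) α) (rtPi n)
      = tvDist ((smMatrix n ^ t) (cyc n 1)) (smPi n) :=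
    fun α => (SM.tv_const t α).trans (SM.tv_eq hn t)
  calc (⨆ α : Equiv.Perm (Fin n), tvDist ((rtMatrix n ^ t) α) (rtPi n))
      = ⨆ _ : Equiv.Perm (Fin n), tvDist ((smMatrix n ^ t) (cyc n 1)) (smPi n) := by
        simp only [h1]
    _ = tvDist ((smMatrix n ^ t) (cyc n 1)) (smPi n) := ciSup_const
    _ ≤ ⨆ σ : Nat.Partition n, tvDist ((smMatrix n ^ t) σ) (smPi n) :=
        le_ciSup (f := fun σ : Nat.Partition n => tvDist ((smMatrix n ^ t) σ) (smPi n))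
          (Set.Finite.bddAbove (Set.finite_range _)) (cyc n 1)

end
end

section
/- Let n ≥ 1 and let σ ≠ τ be two permutations in S_n. For any coupling (X₁, Y₁) of one step of the random transposition walk from σ and one step from τ (i.e., any joint distribution on S_n × S_n whose first marginal is P̄(σ,·) and whose second marginal is P̄(τ,·)), the probability that X₁ = Y₁ is at most 6/n². -/
noncomputable section
open scoped BigOperators Classical

private lemma mySwapT {n : ℕ} {s : Equiv.Perm (Fin n)}
    (hs : ∃ i j : Fin n, s = Equiv.swap i j) {x : Fin n} (hx : s x ≠ x) :
    s = Equiv.swap x (s x) := by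
  obtain ⟨i, j, rfl⟩ := hs
  rcases eq_or_ne x i with rfl | hxi
  · rw [Equiv.swap_apply_left]
  · rcases eq_or_ne x j with rfl | hxj
    · rw [Equiv.swap_apply_right, Equiv.swap_comm]
    · exact absurd (Equiv.swap_apply_of_ne_of_ne hxi hxj) hx

private lemma myCardSwap {n : ℕ} {s : Equiv.Perm (Fin n)} (hs : s ≠ 1) :
    (Finset.univ.filter (fun p : Fin n × Fin n => Equiv.swap p.1 p.2 = s)).card ≤ 2 := by
  rcases (Finset.univ.filter (fun p : Fin n × Fin n => Equiv.swap p.1 p.2 = s)).eq_empty_or_nonempty with h | ⟨⟨i, j⟩, hij⟩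
  · simp [h]
  · simp only [Finset.mem_filter] at hij
    have hij' : Equiv.swap i j = s := hij.2
    have hne : i ≠ j := by
      rintro rfl
      rw [Equiv.swap_self] at hij'
      exact hs (by rw [← hij']; rfl)
    have hsub : (Finset.univ.filter (fun p : Fin n × Fin n => Equiv.swap p.1 p.2 = s))
        ⊆ {(i, j), (j, i)} := by
      rintro ⟨i', j'⟩ hp
      simp only [Finset.mem_filter] at hp
      have heq : Equiv.swap i' j' = Equiv.swap i j := hp.2.trans hij'.symm
      have h1 : Equiv.swap i' j' i = j := by rw [heq, Equiv.swap_apply_left]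
      have h2 : Equiv.swap i' j' j = i := by rw [heq, Equiv.swap_apply_right]
      simp only [Finset.mem_insert, Finset.mem_singleton, Prod.mk.injEq]
      rcases eq_or_ne i i' with rfl | hii'
      · left
        constructor
        · rfl
        · rw [Equiv.swap_apply_left] at h1; exact h1
      · rcases eq_or_ne i j' with rfl | hij''
        · right
          rw [Equiv.swap_apply_right] at h1
          rw [h1, Equiv.swap_apply_left] at h2
          exact ⟨h1, h2⟩
        · rw [Equiv.swap_apply_of_ne_of_ne hii' hij''] at h1
          exact absurd h1 hne
    calc _ ≤ ({(i, j), (j, i)} : Finset (Fin n × Fin n)).card := Finset.card_le_card hsub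
      _ ≤ 2 := (Finset.card_insert_le _ _).trans (by simp)

/-- For any one-step coupling of the random transposition walk from `σ ≠ τ`, the
probability of meeting is at most `6/n²`. -/
theorem one_step_meeting_prob_le (n : ℕ) (hn : 1 ≤ n) (σ τ : Equiv.Perm (Fin n))
    (hne : σ ≠ τ) (μ : Equiv.Perm (Fin n) × Equiv.Perm (Fin n) → ℝ)
    (hpos : ∀ z, 0 ≤ μ z)
    (h1 : ∀ a, ∑ b, μ (a, b) = rtMatrix n σ a)
    (h2 : ∀ b, ∑ a, μ (a, b) = rtMatrix n τ b) :
    ∑ a, μ (a, a) ≤ 6 / (n : ℝ) ^ 2 := by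
  have hn2 : (0 : ℝ) < (n : ℝ) ^ 2 := by positivity
  set ρ : Equiv.Perm (Fin n) := τ⁻¹ * σ with hρdef
  have hρ1 : ρ ≠ 1 := fun h => hne (inv_mul_eq_one.mp h).symm
  obtain ⟨x, hx⟩ : ∃ x, ρ x ≠ x := by
    by_contra h
    push_neg at h
    exact hρ1 (Equiv.ext fun y => h y)
  set S : Finset (Equiv.Perm (Fin n)) :=
    Finset.univ.filter (fun a : Equiv.Perm (Fin n) => μ (a, a) ≠ 0) with hSdef
  have hmarg1 : ∀ a, μ (a, a) ≤ rtMatrix n σ a := fun a => by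
    rw [← h1 a]; exact Finset.single_le_sum (fun b _ => hpos (a, b)) (Finset.mem_univ a)
  have hmarg2 : ∀ a, μ (a, a) ≤ rtMatrix n τ a := fun a => by
    rw [← h2 a]; exact Finset.single_le_sum (fun b _ => hpos (b, a)) (Finset.mem_univ a)
  -- from positivity of rtMatrix, membership in the "swap" set
  have hTgen : ∀ (g a : Equiv.Perm (Fin n)), 0 < rtMatrix n g a →
      ∃ i j : Fin n, g⁻¹ * a = Equiv.swap i j := by
    intro g a hpos'
    unfold rtMatrix at hpos'
    have hcard : (Finset.univ.filter
        (fun ij : Fin n × Fin n => g * Equiv.swap ij.1 ij.2 = a)).card ≠ 0 := by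
      intro h0
      rw [h0] at hpos'
      simp at hpos'
    obtain ⟨⟨i, j⟩, hij⟩ := Finset.card_ne_zero.mp hcard
    simp only [Finset.mem_filter] at hij
    exact ⟨i, j, by rw [← hij.2]; group⟩
  have hμpos : ∀ a ∈ S, 0 < μ (a, a) := by
    intro a ha
    simp only [hSdef, Finset.mem_filter] at ha
    exact lt_of_le_of_ne (hpos (a, a)) (Ne.symm ha.2)
  have hTσ : ∀ a ∈ S, ∃ i j : Fin n, σ⁻¹ * a = Equiv.swap i j := fun a ha =>
    hTgen σ a (lt_of_lt_of_le (hμpos a ha) (hmarg1 a))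
  have hTτ : ∀ a ∈ S, ∃ i j : Fin n, τ⁻¹ * a = Equiv.swap i j := fun a ha =>
    hTgen τ a (lt_of_lt_of_le (hμpos a ha) (hmarg2 a))
  have hρs : ∀ a : Equiv.Perm (Fin n), ρ * (σ⁻¹ * a) = τ⁻¹ * a := by
    intro a; rw [hρdef]; group
  -- each term ≤ 2/n²
  have hterm : ∀ a ∈ S, μ (a, a) ≤ 2 / (n : ℝ) ^ 2 := by
    intro a _
    have key : ∀ g : Equiv.Perm (Fin n), a ≠ g → rtMatrix n g a ≤ 2 / (n : ℝ) ^ 2 := by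
      intro g hag
      unfold rtMatrix
      have hfe : (Finset.univ.filter (fun ij : Fin n × Fin n => g * Equiv.swap ij.1 ij.2 = a))
          = (Finset.univ.filter (fun ij : Fin n × Fin n => Equiv.swap ij.1 ij.2 = g⁻¹ * a)) := by
        apply Finset.filter_congr
        intro p _
        constructor
        · intro h; rw [← h]; group
        · intro h; rw [h]; group
      have hne1 : g⁻¹ * a ≠ 1 := fun h => hag (inv_mul_eq_one.mp h).symm
      have hc := myCardSwap hne1
      rw [hfe]
      gcongr
      exact_mod_cast hc
    rcases eq_or_ne a σ with rfl | haσ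
    · exact (hmarg2 a).trans (key τ (by simpa using hne))
    · exact (hmarg1 a).trans (key σ haσ)
  -- |S| ≤ 3
  have hcardS : S.card ≤ 3 := by
    have himg : ∀ a ∈ S, (σ⁻¹ * a) x ∈ ({x, ρ x, ρ⁻¹ x} : Finset (Fin n)) := by
      intro a ha
      simp only [Finset.mem_insert, Finset.mem_singleton]
      by_cases h1' : (σ⁻¹ * a) x = x
      · exact Or.inl h1'
      by_cases h2' : (σ⁻¹ * a) x = ρ x
      · exact Or.inr (Or.inl h2')
      right; right
      set s := σ⁻¹ * a with hs
      have hseq : s = Equiv.swap x (s x) := mySwapT (hTσ a ha) h1'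
      set t := τ⁻¹ * a with ht
      have htρs : t = ρ * s := (hρs a).symm
      have hss : s (s x) = x := by
        nth_rewrite 1 [hseq]
        rw [Equiv.swap_apply_right]
      have hty : t (s x) = ρ x := by
        rw [htρs, Equiv.Perm.mul_apply, hss]
      have htne : t (s x) ≠ s x := by rw [hty]; exact fun h => h2' h.symm
      have hteq : t = Equiv.swap (s x) (ρ x) := by
        have := mySwapT (hTτ a ha) htne
        rwa [hty] at this
      have hρy : ρ (s x) = x := by
        have htx : ρ (s x) = t x := by rw [htρs]; rfl
        rw [htx, hteq,
          Equiv.swap_apply_of_ne_of_ne (fun h => h1' h.symm) (fun h => hx h.symm)]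
      have : ρ (s x) = ρ (ρ⁻¹ x) := by rw [hρy, ← Equiv.Perm.mul_apply, mul_inv_cancel, Equiv.Perm.one_apply]
      exact ρ.injective this
    have hinj : Set.InjOn (fun a : Equiv.Perm (Fin n) => (σ⁻¹ * a) x) S := by
      intro a ha a' ha' heq
      simp only at heq
      by_cases h1' : (σ⁻¹ * a) x = x
      · have h1'' : (σ⁻¹ * a') x = x := by rw [← heq]; exact h1'
        have ht1 : (τ⁻¹ * a) x = ρ x := by
          rw [← hρs a, Equiv.Perm.mul_apply, h1']
        have ht2 : (τ⁻¹ * a') x = ρ x := by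
          rw [← hρs a', Equiv.Perm.mul_apply, h1'']
        have e1 : τ⁻¹ * a = Equiv.swap x (ρ x) := by
          have := mySwapT (hTτ a ha) (by rw [ht1]; exact hx)
          rwa [ht1] at this
        have e2 : τ⁻¹ * a' = Equiv.swap x (ρ x) := by
          have := mySwapT (hTτ a' ha') (by rw [ht2]; exact hx)
          rwa [ht2] at this
        exact mul_left_cancel (e1.trans e2.symm)
      · have e1 : σ⁻¹ * a = Equiv.swap x ((σ⁻¹ * a) x) := mySwapT (hTσ a ha) h1'
        have e2 : σ⁻¹ * a' = Equiv.swap x ((σ⁻¹ * a') x) := mySwapT (hTσ a' ha')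
          (by rw [← heq]; exact h1')
        rw [← heq] at e2
        exact mul_left_cancel (e1.trans e2.symm)
    calc S.card ≤ ({x, ρ x, ρ⁻¹ x} : Finset (Fin n)).card :=
          Finset.card_le_card_of_injOn _ himg hinj
      _ ≤ 3 := (Finset.card_insert_le _ _).trans (Nat.succ_le_succ
          ((Finset.card_insert_le _ _).trans (by simp)))
  -- combine
  calc ∑ a, μ (a, a) = ∑ a ∈ S, μ (a, a) := (Finset.sum_filter_ne_zero _).symm
    _ ≤ ∑ _a ∈ S, 2 / (n : ℝ) ^ 2 := Finset.sum_le_sum hterm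
    _ = S.card * (2 / (n : ℝ) ^ 2) := by rw [Finset.sum_const, nsmul_eq_mul]
    _ ≤ 3 * (2 / (n : ℝ) ^ 2) := by
        apply mul_le_mul_of_nonneg_right _ (by positivity)
        exact_mod_cast hcardS
    _ = 6 / (n : ℝ) ^ 2 := by ring

end
end

section
/- Let (X_t, Y_t)_{t≥0} be any Markovian coupling of two random transposition walks on S_n, i.e., a Markov chain on S_n × S_n such that each coordinate process evolves with transition matrix P̄. If X₀ ≠ Y₀, then for every t₀ ≥ 0 the meeting time T = min{t : X_t = Y_t} satisfies ℙ(T ≤ t₀) ≤ 6·t₀/n². In particular a Markovian coupling takes at least order n² time to meet with constant probability. -/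
noncomputable section
open scoped BigOperators Classical

section AuxLemmas
open Finset Equiv


-- helper: swap determined by one moved point
lemma aux_swap_eq {α : Type*} [DecidableEq α] {c d u v : α} (hcd : c ≠ d) (huv : u ≠ v)
    (h : Equiv.swap c d u = v) : Equiv.swap c d = Equiv.swap u v := by
  by_cases huc : u = c
  · subst huc; rw [Equiv.swap_apply_left] at h; subst h; rfl
  · by_cases hud : u = d
    · subst hud; rw [Equiv.swap_apply_right] at h; subst h; exact Equiv.swap_comm _ _
    · rw [Equiv.swap_apply_of_ne_of_ne huc hud] at h; exact absurd h huv

lemma aux_card3 {α : Type*} [DecidableEq α] (a b c : α) : ({a, b, c} : Finset α).card ≤ 3 := by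
  apply le_trans (Finset.card_insert_le _ _)
  have := Finset.card_insert_le b ({c} : Finset α)
  simp at this ⊢
  omega

-- every element of E (other than structure) is swap w (δ w) for moved w
lemma aux_form {n : ℕ} {δ s : Equiv.Perm (Fin n)} (hδ : δ ≠ 1)
    (hs : s.IsSwap) (hs' : (δ⁻¹ * s).IsSwap) :
    ∃ w, δ w ≠ w ∧ s = Equiv.swap w (δ w) := by
  obtain ⟨u, v, huv, rfl⟩ := hs
  obtain ⟨c, d, hcd, hcd'⟩ := hs'
  have hδeq : δ = Equiv.swap u v * Equiv.swap c d := by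
    have : δ * (δ⁻¹ * Equiv.swap u v) = Equiv.swap u v := by group
    rw [hcd'] at this
    calc δ = Equiv.swap u v * (Equiv.swap c d)⁻¹ := by
              rw [← this]; group
      _ = Equiv.swap u v * Equiv.swap c d := by rw [Equiv.swap_inv]
  -- pointwise: δ x = swap u v (swap c d x)
  have hpt : ∀ x, δ x = Equiv.swap u v (Equiv.swap c d x) := by
    intro x; rw [hδeq]; rfl
  -- u is moved
  have hu : δ u ≠ u := by
    intro h
    rw [hpt u] at h
    have h2 : Equiv.swap c d u = v := by
      have := congrArg (Equiv.swap u v) h.symm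
      rw [Equiv.swap_apply_self, Equiv.swap_apply_left] at this
      exact this.symm
    have := aux_swap_eq hcd huv h2
    rw [this] at hδeq
    simp [Equiv.swap_mul_self] at hδeq
    exact hδ hδeq
  have hv : δ v ≠ v := by
    intro h
    rw [hpt v] at h
    have h2 : Equiv.swap c d v = u := by
      have := congrArg (Equiv.swap u v) h.symm
      rw [Equiv.swap_apply_self, Equiv.swap_apply_right] at this
      exact this.symm
    have := aux_swap_eq hcd (Ne.symm huv) h2
    rw [Equiv.swap_comm v u] at this
    rw [this] at hδeq
    simp [Equiv.swap_mul_self] at hδeq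
    exact hδ hδeq
  -- v = δ u or u = δ v
  by_cases h1 : δ u = v
  · exact ⟨u, hu, by rw [h1]⟩
  by_cases h2 : δ v = u
  · exact ⟨v, hv, by rw [h2, Equiv.swap_comm]⟩
  exfalso
  -- swap c d must move both u and v
  have hcu : Equiv.swap c d u ≠ u := by
    intro h
    rw [hpt u, h, Equiv.swap_apply_left] at h1
    exact h1 rfl
  have hcv : Equiv.swap c d v ≠ v := by
    intro h
    rw [hpt v, h, Equiv.swap_apply_right] at h2
    exact h2 rfl
  -- so {c,d} = {u,v}, i.e. swap c d = swap u v, δ = 1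
  have hu' : u = c ∨ u = d := by
    by_contra hcon; push_neg at hcon
    exact hcu (Equiv.swap_apply_of_ne_of_ne hcon.1 hcon.2)
  have hv' : v = c ∨ v = d := by
    by_contra hcon; push_neg at hcon
    exact hcv (Equiv.swap_apply_of_ne_of_ne hcon.1 hcon.2)
  have : Equiv.swap c d = Equiv.swap u v := by
    rcases hu' with rfl | rfl
    · rcases hv' with rfl | rfl
      · exact absurd rfl huv
      · rfl
    · rcases hv' with rfl | rfl
      · exact Equiv.swap_comm _ _
      · exact absurd rfl huv
  rw [this] at hδeq
  simp [Equiv.swap_mul_self] at hδeq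
  exact hδ hδeq

lemma aux_isSwap_sign {n : ℕ} {s : Equiv.Perm (Fin n)} (h : s.IsSwap) :
    Equiv.Perm.sign s = -1 := by
  obtain ⟨a, b, hab, rfl⟩ := h; exact Equiv.Perm.sign_swap hab

lemma aux_swapset {n : ℕ} (δ : Equiv.Perm (Fin n)) (hδ : δ ≠ 1) :
    (Finset.univ.filter (fun s : Equiv.Perm (Fin n) =>
      (s = 1 ∨ s.IsSwap) ∧ (δ⁻¹ * s = 1 ∨ (δ⁻¹ * s).IsSwap))).card ≤ 3 := by
  by_cases hsw : δ.IsSwap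
  · refine le_trans (Finset.card_le_card (?_ : _ ⊆ ({1, δ} : Finset _))) ?_
    · intro s hs
      simp only [Finset.mem_filter, Finset.mem_univ, true_and] at hs
      obtain ⟨h1, h2⟩ := hs
      simp only [Finset.mem_insert, Finset.mem_singleton]
      rcases h1 with rfl | hs1
      · exact Or.inl rfl
      rcases h2 with h2 | hs2
      · right
        have := congrArg (fun z => δ * z) h2
        simpa [mul_assoc] using this
      · exfalso
        have hde : δ = s * (δ⁻¹ * s)⁻¹ := by group
        have hsign := congrArg Equiv.Perm.sign hde
        rw [map_mul, map_inv, aux_isSwap_sign hs1, aux_isSwap_sign hs2,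
          aux_isSwap_sign hsw] at hsign
        norm_num at hsign
    · apply le_trans (Finset.card_insert_le _ _); simp
  · -- δ not a swap: all elements are swaps of the form swap w (δ w)
    set E := Finset.univ.filter (fun s : Equiv.Perm (Fin n) =>
      (s = 1 ∨ s.IsSwap) ∧ (δ⁻¹ * s = 1 ∨ (δ⁻¹ * s).IsSwap)) with hE
    rcases E.eq_empty_or_nonempty with he | ⟨s₀, hs₀⟩
    · simp [he]
    have hmem : ∀ s ∈ E, s.IsSwap ∧ (δ⁻¹ * s).IsSwap := by
      intro s hs
      simp only [hE, Finset.mem_filter, Finset.mem_univ, true_and] at hs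
      obtain ⟨h1, h2⟩ := hs
      rcases h1 with rfl | hs1
      · exfalso
        rcases h2 with h2 | h2
        · rw [mul_one] at h2; exact hδ (by rw [← inv_inv δ, h2, inv_one])
        · rw [mul_one] at h2
          obtain ⟨a, b, hab, h3⟩ := h2
          exact hsw ⟨a, b, hab, by rw [← inv_inv δ, h3, Equiv.swap_inv]⟩
      rcases h2 with h2 | hs2
      · exfalso
        have : s = δ := by
          have := congrArg (fun z => δ * z) h2
          simpa [mul_assoc] using this
        rw [this] at hs1; exact hsw hs1
      exact ⟨hs1, hs2⟩
    obtain ⟨hs₀1, hs₀2⟩ := hmem s₀ hs₀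
    obtain ⟨p, q, hpq, hpq'⟩ := hs₀1
    obtain ⟨r, t, hrt, hrt'⟩ := hs₀2
    have hδeq : δ = Equiv.swap p q * Equiv.swap r t := by
      have : δ * (δ⁻¹ * s₀) = s₀ := by group
      rw [hrt', hpq'] at this
      calc δ = Equiv.swap p q * (Equiv.swap r t)⁻¹ := by rw [← this]; group
        _ = _ := by rw [Equiv.swap_inv]
    -- E is contained in the image of w ↦ swap w (δ w) over {p,q,r,t}
    have hsub : E ⊆ Finset.image (fun w => Equiv.swap w (δ w)) ({p, q, r, t} : Finset (Fin n)) := by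
      intro s hs
      obtain ⟨h1, h2⟩ := hmem s hs
      obtain ⟨w, hw, hweq⟩ := aux_form hδ h1 h2
      refine Finset.mem_image.mpr ⟨w, ?_, hweq.symm⟩
      simp only [Finset.mem_insert, Finset.mem_singleton]
      by_contra hcon; push_neg at hcon
      obtain ⟨h1', h2', h3', h4'⟩ := hcon
      apply hw
      rw [hδeq]
      show Equiv.swap p q (Equiv.swap r t w) = w
      rw [Equiv.swap_apply_of_ne_of_ne h3' h4', Equiv.swap_apply_of_ne_of_ne h1' h2']
    apply le_trans (Finset.card_le_card hsub)
    -- now bound the image cardinality by 3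
    by_cases hcoin : p = r ∨ p = t ∨ q = r ∨ q = t
    · apply le_trans (Finset.card_image_le)
      rcases hcoin with rfl | rfl | rfl | rfl
      · rw [show ({p,q,p,t} : Finset (Fin n)) = {p,q,t} by ext x; simp; try tauto]
        exact aux_card3 _ _ _
      · rw [show ({p,q,r,p} : Finset (Fin n)) = {p,q,r} by ext x; simp; try tauto]
        exact aux_card3 _ _ _
      · rw [show ({p,q,q,t} : Finset (Fin n)) = {p,q,t} by ext x; simp; try tauto]
        exact aux_card3 _ _ _
      · rw [show ({p,q,r,q} : Finset (Fin n)) = {p,q,r} by ext x; simp; try tauto]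
        exact aux_card3 _ _ _
    · push_neg at hcoin
      obtain ⟨h1', h2', h3', h4'⟩ := hcoin
      have hδq : δ q = p := by
        rw [hδeq]
        show Equiv.swap p q (Equiv.swap r t q) = p
        rw [Equiv.swap_apply_of_ne_of_ne h3' h4', Equiv.swap_apply_right]
      have hδp : δ p = q := by
        rw [hδeq]
        show Equiv.swap p q (Equiv.swap r t p) = q
        rw [Equiv.swap_apply_of_ne_of_ne h1' h2', Equiv.swap_apply_left]
      refine le_trans (Finset.card_le_card (?_ : _ ⊆ ({Equiv.swap p (δ p),
        Equiv.swap r (δ r), Equiv.swap t (δ t)} : Finset _))) (aux_card3 _ _ _)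
      intro z hz
      obtain ⟨w, hw, rfl⟩ := Finset.mem_image.mp hz
      simp only [Finset.mem_insert, Finset.mem_singleton] at hw ⊢
      rcases hw with rfl | rfl | rfl | rfl
      · left; rfl
      · left; rw [hδq, hδp]; exact Equiv.swap_comm _ _
      · right; left; rfl
      · right; right; rfl

lemma aux_rt_nonneg (n : ℕ) (x a : Equiv.Perm (Fin n)) : 0 ≤ rtMatrix n x a := by
  unfold rtMatrix; positivity

lemma aux_rt_rowsum (n : ℕ) (hn : 1 ≤ n) (x : Equiv.Perm (Fin n)) :
    ∑ a, rtMatrix n x a = 1 := by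
  unfold rtMatrix
  rw [← Finset.sum_div]
  rw [div_eq_one_iff_eq (by positivity)]
  push_cast
  rw [← Nat.cast_sum]
  have : ∑ a : Equiv.Perm (Fin n),
      (Finset.univ.filter (fun ij : Fin n × Fin n => x * Equiv.swap ij.1 ij.2 = a)).card
      = (Finset.univ : Finset (Fin n × Fin n)).card := by
    rw [Finset.card_eq_sum_ones]
    simp only [Finset.card_filter]
    rw [Finset.sum_comm]
    apply Finset.sum_congr rfl
    intro ij _
    rw [Finset.sum_ite_eq (Finset.univ) (x * Equiv.swap ij.1 ij.2) (fun _ => 1)]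
    simp
  rw [this]
  simp [Finset.card_univ]
  push_cast
  ring

-- if rtMatrix x a ≠ 0 then x⁻¹ * a is 1 or a swap
lemma aux_rt_ne (n : ℕ) (x a : Equiv.Perm (Fin n)) (h : rtMatrix n x a ≠ 0) :
    x⁻¹ * a = 1 ∨ (x⁻¹ * a).IsSwap := by
  unfold rtMatrix at h
  have hcard : (Finset.univ.filter
      (fun ij : Fin n × Fin n => x * Equiv.swap ij.1 ij.2 = a)).card ≠ 0 := by
    intro h0; rw [h0] at h; simp at h
  obtain ⟨⟨i, j⟩, hij⟩ := Finset.card_ne_zero.mp hcard  -- nonempty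
  rw [Finset.mem_filter] at hij
  have heq : x * Equiv.swap i j = a := hij.2
  have : x⁻¹ * a = Equiv.swap i j := by rw [← heq]; group
  by_cases hij2 : i = j
  · left; rw [this, hij2, Equiv.swap_self]; rfl
  · right; exact ⟨i, j, hij2, this⟩


lemma aux_rt_le (n : ℕ) (x a : Equiv.Perm (Fin n)) (h : x⁻¹ * a ≠ 1) :
    rtMatrix n x a ≤ 2 / (n : ℝ) ^ 2 := by
  have hn : 0 < n := by
    rcases Nat.eq_zero_or_pos n with rfl | hp
    · exact absurd (Subsingleton.elim _ _) h
    · exact hp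
  have hn2 : (0 : ℝ) < (n : ℝ) ^ 2 := by positivity
  have hcard : (Finset.univ.filter
      (fun ij : Fin n × Fin n => x * Equiv.swap ij.1 ij.2 = a)).card ≤ 2 := by
    set F := Finset.univ.filter
      (fun ij : Fin n × Fin n => x * Equiv.swap ij.1 ij.2 = a) with hF
    rcases F.eq_empty_or_nonempty with he | ⟨⟨i0, j0⟩, h0⟩
    · simp [he]
    rw [hF, Finset.mem_filter] at h0
    have hij0 : i0 ≠ j0 := by
      rintro rfl
      apply h
      rw [← h0.2, Equiv.swap_self]
      group
      rfl
    have ht : x⁻¹ * a = Equiv.swap i0 j0 := by rw [← h0.2]; group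
    apply le_trans (Finset.card_le_card
      (?_ : F ⊆ ({(i0, j0), (j0, i0)} : Finset (Fin n × Fin n))))
    · apply le_trans (Finset.card_insert_le _ _); simp
    · rintro ⟨i, j⟩ hij
      rw [hF, Finset.mem_filter] at hij
      have hij' : i ≠ j := by
        rintro rfl
        apply h
        rw [← hij.2, Equiv.swap_self]
        group
        rfl
      have ht2 : Equiv.swap i0 j0 = Equiv.swap i j := by
        rw [← ht, ← hij.2]; group
      have happ : Equiv.swap i0 j0 i = j := by rw [ht2, Equiv.swap_apply_left]
      simp only [Finset.mem_insert, Finset.mem_singleton, Prod.mk.injEq]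
      by_cases hii : i = i0
      · subst hii
        rw [Equiv.swap_apply_left] at happ
        exact Or.inl ⟨rfl, happ.symm⟩
      · by_cases hid : i = j0
        · subst hid
          rw [Equiv.swap_apply_right] at happ
          exact Or.inr ⟨rfl, happ.symm⟩
        · rw [Equiv.swap_apply_of_ne_of_ne (Ne.symm ?_) (Ne.symm ?_)] at happ
          · exact absurd happ hij'
          · exact fun hc => hii hc.symm
          · exact fun hc => hid hc.symm
  unfold rtMatrix
  rw [div_le_div_iff₀ hn2 hn2]
  have h2 : ((Finset.univ.filter
      (fun ij : Fin n × Fin n => x * Equiv.swap ij.1 ij.2 = a)).card : ℝ) ≤ 2 := by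
    exact_mod_cast hcard
  nlinarith [hn2]

lemma aux_diag (n : ℕ)
    (Q : Matrix (Equiv.Perm (Fin n) × Equiv.Perm (Fin n))
        (Equiv.Perm (Fin n) × Equiv.Perm (Fin n)) ℝ)
    (hpos : ∀ u v, 0 ≤ Q u v)
    (h1 : ∀ x y a, ∑ b, Q (x, y) (a, b) = rtMatrix n x a)
    (h2 : ∀ x y b, ∑ a, Q (x, y) (a, b) = rtMatrix n y b)
    (x y : Equiv.Perm (Fin n)) (hxy : x ≠ y) :
    ∑ a, Q (x, y) (a, a) ≤ 6 / (n : ℝ) ^ 2 := by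
  set D := Finset.univ.filter
    (fun a : Equiv.Perm (Fin n) => rtMatrix n x a ≠ 0 ∧ rtMatrix n y a ≠ 0) with hD
  have hQx : ∀ a, Q (x, y) (a, a) ≤ rtMatrix n x a := fun a => by
    rw [← h1 x y a]
    exact Finset.single_le_sum (fun b _ => hpos _ _) (Finset.mem_univ a)
  have hQy : ∀ a, Q (x, y) (a, a) ≤ rtMatrix n y a := fun a => by
    rw [← h2 x y a]
    exact Finset.single_le_sum (f := fun b => Q (x, y) (b, a))
      (fun b _ => hpos _ _) (Finset.mem_univ a)
  have hzero : ∀ a ∉ D, Q (x, y) (a, a) = 0 := by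
    intro a ha
    rw [hD, Finset.mem_filter] at ha
    push_neg at ha
    rcases Classical.em (rtMatrix n x a = 0) with hx0 | hx0
    · exact le_antisymm (by rw [← hx0]; exact hQx a) (hpos _ _)
    · have := ha (Finset.mem_univ a) hx0
      exact le_antisymm (by rw [← this]; exact hQy a) (hpos _ _)
  have hbound : ∀ a ∈ D, Q (x, y) (a, a) ≤ 2 / (n : ℝ) ^ 2 := by
    intro a _
    by_cases hax : a = x
    · subst hax
      refine le_trans (hQy a) (aux_rt_le n y a ?_)
      intro hc
      exact hxy (inv_mul_eq_one.mp hc).symm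
    · refine le_trans (hQx a) (aux_rt_le n x a ?_)
      intro hc
      exact hax (inv_mul_eq_one.mp hc).symm
  have hδ : x⁻¹ * y ≠ 1 := fun hc => hxy (inv_mul_eq_one.mp hc)
  have hDcard : D.card ≤ 3 := by
    refine le_trans (Finset.card_le_card_of_injOn (fun a => x⁻¹ * a) ?_ ?_)
      (aux_swapset (x⁻¹ * y) hδ)
    · intro a ha
      rw [Finset.mem_coe, hD, Finset.mem_filter] at ha
      simp only [Finset.mem_coe, Finset.mem_filter, Finset.mem_univ, true_and]
      constructor
      · exact aux_rt_ne n x a ha.2.1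
      · have h3 := aux_rt_ne n y a ha.2.2
        have : (x⁻¹ * y)⁻¹ * (x⁻¹ * a) = y⁻¹ * a := by group
        rw [this]
        exact h3
    · intro a _ b _ hab
      exact mul_left_cancel hab
  calc ∑ a, Q (x, y) (a, a) = ∑ a ∈ D, Q (x, y) (a, a) :=
        (Finset.sum_subset (Finset.subset_univ D) (fun a _ ha => hzero a ha)).symm
    _ ≤ ∑ a ∈ D, 2 / (n : ℝ) ^ 2 := Finset.sum_le_sum hbound
    _ = (D.card : ℝ) * (2 / (n : ℝ) ^ 2) := by rw [Finset.sum_const, nsmul_eq_mul]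
    _ ≤ 3 * (2 / (n : ℝ) ^ 2) := by
        have : (D.card : ℝ) ≤ 3 := by exact_mod_cast hDcard
        have h2n : (0 : ℝ) ≤ 2 / (n : ℝ) ^ 2 := by positivity
        nlinarith
    _ = 6 / (n : ℝ) ^ 2 := by ring


end AuxLemmas

/-- A Markovian coupling of two random transposition walks started apart meets by time `t₀`
with probability at most `6 t₀ / n²`. The probability of having met by time `t₀` is expressed
as `1` minus the total mass of the diagonal-avoiding (killed) transition matrix. -/
theorem markovian_coupling_slow (n : ℕ) (hn : 1 ≤ n)
    (Q : Matrix (Equiv.Perm (Fin n) × Equiv.Perm (Fin n))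
        (Equiv.Perm (Fin n) × Equiv.Perm (Fin n)) ℝ)
    (hpos : ∀ u v, 0 ≤ Q u v)
    (h1 : ∀ x y a, ∑ b, Q (x, y) (a, b) = rtMatrix n x a)
    (h2 : ∀ x y b, ∑ a, Q (x, y) (a, b) = rtMatrix n y b)
    (x₀ y₀ : Equiv.Perm (Fin n)) (hne : x₀ ≠ y₀) (t₀ : ℕ) :
    1 - ∑ w, (((Matrix.of fun u v => if v.1 = v.2 then (0 : ℝ) else Q u v) ^ t₀) (x₀, y₀)) w
      ≤ 6 * t₀ / (n : ℝ) ^ 2 := by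
  classical
  have hn2 : (0 : ℝ) < (n : ℝ) ^ 2 := by positivity
  set M : Matrix (Equiv.Perm (Fin n) × Equiv.Perm (Fin n))
      (Equiv.Perm (Fin n) × Equiv.Perm (Fin n)) ℝ :=
    Matrix.of fun u v => if v.1 = v.2 then (0 : ℝ) else Q u v with hMdef
  have hM_nonneg : ∀ u v, 0 ≤ M u v := by
    intro u v
    simp only [hMdef, Matrix.of_apply]
    split_ifs
    · exact le_rfl
    · exact hpos u v
  have hpow_nonneg : ∀ (t : ℕ) u v, 0 ≤ (M ^ t) u v := by
    intro t
    induction t with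
    | zero =>
        intro u v
        rw [pow_zero, Matrix.one_apply]
        split_ifs <;> norm_num
    | succ t ih =>
        intro u v
        rw [pow_succ, Matrix.mul_apply]
        exact Finset.sum_nonneg fun w _ => mul_nonneg (ih u w) (hM_nonneg w v)
  have hdiag : ∀ (t : ℕ) (v : Equiv.Perm (Fin n) × Equiv.Perm (Fin n)),
      v.1 = v.2 → (M ^ t) (x₀, y₀) v = 0 := by
    intro t v hv
    cases t with
    | zero =>
        rw [pow_zero, Matrix.one_apply]
        rw [if_neg]
        intro h
        apply hne
        rw [show x₀ = v.1 from congrArg Prod.fst h, show y₀ = v.2 from congrArg Prod.snd h, hv]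
    | succ t =>
        rw [pow_succ, Matrix.mul_apply]
        apply Finset.sum_eq_zero
        intro w _
        have : M w v = 0 := by simp only [hMdef, Matrix.of_apply, if_pos hv]
        rw [this, mul_zero]
  have hQrow : ∀ u : Equiv.Perm (Fin n) × Equiv.Perm (Fin n), ∑ v, Q u v = 1 := by
    intro u
    rw [show u = (u.1, u.2) from rfl, Fintype.sum_prod_type]
    calc ∑ a, ∑ b, Q (u.1, u.2) (a, b) = ∑ a, rtMatrix n u.1 a :=
          Finset.sum_congr rfl fun a _ => h1 u.1 u.2 a
      _ = 1 := aux_rt_rowsum n hn u.1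
  have hMrow : ∀ u, ∑ v, M u v = 1 - ∑ a, Q u (a, a) := by
    intro u
    have hsplit : ∀ v : Equiv.Perm (Fin n) × Equiv.Perm (Fin n),
        M u v = Q u v - (if v.1 = v.2 then Q u v else 0) := by
      intro v
      simp only [hMdef, Matrix.of_apply]
      split_ifs <;> ring
    rw [Finset.sum_congr rfl (fun v _ => hsplit v), Finset.sum_sub_distrib, hQrow u]
    congr 1
    rw [Fintype.sum_prod_type]
    apply Finset.sum_congr rfl
    intro a _
    simp
  have hg : ∀ u : Equiv.Perm (Fin n) × Equiv.Perm (Fin n), u.1 ≠ u.2 →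
      ∑ a, Q u (a, a) ≤ 6 / (n : ℝ) ^ 2 := by
    intro u hu
    exact aux_diag n Q hpos h1 h2 u.1 u.2 hu
  have hgnn : ∀ u, 0 ≤ ∑ a, Q u (a, a) := fun u => Finset.sum_nonneg fun a _ => hpos _ _
  set f : ℕ → ℝ := fun t => ∑ w, (M ^ t) (x₀, y₀) w with hfdef
  have hf0 : f 0 = 1 := by
    simp only [hfdef, pow_zero]
    simp [Matrix.one_apply]
  have hexp : ∀ t, f (t + 1) = f t - ∑ u, (M ^ t) (x₀, y₀) u * (∑ a, Q u (a, a)) := by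
    intro t
    calc f (t + 1) = ∑ w, ∑ u, (M ^ t) (x₀, y₀) u * M u w := by
          simp only [hfdef]
          exact Finset.sum_congr rfl fun w _ => by rw [pow_succ, Matrix.mul_apply]
      _ = ∑ u, (M ^ t) (x₀, y₀) u * ∑ w, M u w := by
          rw [Finset.sum_comm]
          exact Finset.sum_congr rfl fun u _ => by rw [Finset.mul_sum]
      _ = ∑ u, (M ^ t) (x₀, y₀) u * (1 - ∑ a, Q u (a, a)) := by
          exact Finset.sum_congr rfl fun u _ => by rw [hMrow u]
      _ = f t - ∑ u, (M ^ t) (x₀, y₀) u * (∑ a, Q u (a, a)) := by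
          simp only [hfdef]
          rw [← Finset.sum_sub_distrib]
          exact Finset.sum_congr rfl fun u _ => by ring
  have hkill_nn : ∀ t, 0 ≤ ∑ u, (M ^ t) (x₀, y₀) u * (∑ a, Q u (a, a)) := fun t =>
    Finset.sum_nonneg fun u _ => mul_nonneg (hpow_nonneg t _ u) (hgnn u)
  have hdec : ∀ t, f (t + 1) ≤ f t := by
    intro t
    rw [hexp t]
    linarith [hkill_nn t]
  have hfle1 : ∀ t, f t ≤ 1 := by
    intro t
    induction t with
    | zero => exact hf0.le
    | succ t ih => exact le_trans (hdec t) ih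
  have hkill_le : ∀ t, ∑ u, (M ^ t) (x₀, y₀) u * (∑ a, Q u (a, a)) ≤ 6 / (n : ℝ) ^ 2 := by
    intro t
    have h6 : (0 : ℝ) ≤ 6 / (n : ℝ) ^ 2 := by positivity
    calc ∑ u, (M ^ t) (x₀, y₀) u * (∑ a, Q u (a, a))
        ≤ ∑ u, (M ^ t) (x₀, y₀) u * (6 / (n : ℝ) ^ 2) := by
          apply Finset.sum_le_sum
          intro u _
          rcases eq_or_ne u.1 u.2 with h | h
          · rw [hdiag t u h]
            simp
          · exact mul_le_mul_of_nonneg_left (hg u h) (hpow_nonneg t _ u)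
      _ = (∑ u, (M ^ t) (x₀, y₀) u) * (6 / (n : ℝ) ^ 2) := by rw [← Finset.sum_mul]
      _ ≤ 6 / (n : ℝ) ^ 2 := by
          have hft : f t ≤ 1 := hfle1 t
          have : (∑ u, (M ^ t) (x₀, y₀) u) = f t := rfl
          rw [this]
          nlinarith
  have hmain : ∀ t, 1 - f t ≤ 6 * (t : ℝ) / (n : ℝ) ^ 2 := by
    intro t
    induction t with
    | zero => simp [hf0]
    | succ t ih =>
        have he := hexp t
        have hk := hkill_le t
        have harith : 6 * ((t : ℝ) + 1) / (n : ℝ) ^ 2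
            = 6 * (t : ℝ) / (n : ℝ) ^ 2 + 6 / (n : ℝ) ^ 2 := by
          field_simp
        push_cast
        rw [harith]
        linarith
  have := hmain t₀
  exact this

end
end
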